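/- arXiv:1905.07605 — 4 statements merged into one kernel-verified Lean document; each statement's English description precedes it below -/
import Mathlib

section
/- Let Γ be a countable group acting faithfully on the right by homeomorphisms on a topological space X, let U and V be disjoint nonempty open subsets of X such that Γ_{U→V} ≠ ∅, and let μ be an invariant random subgroup of Γ. Then for every finite subset A of the set of partial homeomorphisms Γ̄_{U→V}, μ-almost every subgroup H with H̄_{U→V} ∩ A ≠ ∅ satisfies that the index of H̄_{U→U} ∩ R_Γ(U) in R_Γ(U) is finite, where both H̄_{U→U} and R_Γ(U) are viewed as groups of homeomorphisms of U. -/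
open MeasureTheory

/-- The measurable structure on the space of subgroups of a group, obtained from the
product ("cylinder") σ-algebra on `Set Γ ≅ {0,1}^Γ` via the embedding `H ↦ (H : Set Γ)`. -/
instance subgroupMeasurableSpace {Γ : Type*} [Group Γ] : MeasurableSpace (Subgroup Γ) :=
  MeasurableSpace.comap (fun H => (H : Set Γ)) inferInstance

/-- The conjugate of a subgroup `H` by a group element `g`. -/
def conjSubgroup {Γ : Type*} [Group Γ] (g : Γ) (H : Subgroup Γ) : Subgroup Γ :=
  Subgroup.map (MulAut.conj g).toMonoidHom H

/-- An invariant random subgroup: a Borel probability measure on `Sub(Γ)` invariant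
under the conjugation action of `Γ`. -/
def IsIRS {Γ : Type*} [Group Γ] (μ : Measure (Subgroup Γ)) : Prop :=
  IsProbabilityMeasure μ ∧ ∀ g : Γ, μ.map (conjSubgroup g) = μ

namespace Stmt0Aux

variable {Γ X : Type*} [Group Γ] [TopologicalSpace X]

/-! ### Group-theoretic preliminaries on `conjSubgroup` -/

lemma mem_conjSubgroup_iff (c y : Γ) (H : Subgroup Γ) :
    y ∈ conjSubgroup c H ↔ c⁻¹ * y * c ∈ H := by
  constructor
  · rintro ⟨x, hx, rfl⟩
    have e : c⁻¹ * ((MulAut.conj c).toMonoidHom x) * c = x := by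
      simp [MulAut.conj_apply]; group
    rwa [e]
  · intro h
    refine ⟨c⁻¹ * y * c, h, ?_⟩
    simp [MulAut.conj_apply]; group

/-! ### Basic facts about the right action `x · g = ρ g x` -/

section Act

variable (ρ : Γ → (X ≃ₜ X)) (hact : ∀ g h : Γ, ∀ x : X, ρ (g * h) x = ρ h (ρ g x))

include hact

lemma act_one (x : X) : ρ 1 x = x := by
  have h := hact 1 1 x
  rw [one_mul] at h
  exact ((ρ 1).injective h).symm

lemma act_inv_left (g : Γ) (x : X) : ρ g⁻¹ (ρ g x) = x := by
  have h := hact g g⁻¹ x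
  rw [mul_inv_cancel, act_one ρ hact] at h
  exact h.symm

lemma act_inv_right (g : Γ) (x : X) : ρ g (ρ g⁻¹ x) = x := by
  have h := hact g⁻¹ g x
  rw [inv_mul_cancel, act_one ρ hact] at h
  exact h.symm

lemma act_triple (a b c : Γ) (x : X) : ρ (a * b * c) x = ρ c (ρ b (ρ a x)) := by
  rw [hact (a * b) c, hact a b]

/-! ### Rigid elements -/

/-- `t` acts trivially outside `W`. -/
def Rig (W : Set X) (t : Γ) : Prop := ∀ x ∉ W, ρ t x = x

variable {W : Set X}

omit hact in
lemma rig_mem {t : Γ} (ht : Rig ρ W t) {x : X} (hx : x ∈ W) : ρ t x ∈ W := by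
  by_contra hnot
  have h1 : ρ t (ρ t x) = ρ t x := ht _ hnot
  have := (ρ t).injective h1
  rw [this] at hnot
  exact hnot hx

lemma rig_one : Rig ρ W (1 : Γ) := fun x _ => act_one ρ hact x

lemma rig_inv {t : Γ} (ht : Rig ρ W t) : Rig ρ W t⁻¹ := by
  intro x hx
  have h1 : ρ t x = x := ht x hx
  calc ρ t⁻¹ x = ρ t⁻¹ (ρ t x) := by rw [h1]
    _ = x := act_inv_left ρ hact t x

lemma rig_mul {t t' : Γ} (ht : Rig ρ W t) (ht' : Rig ρ W t') : Rig ρ W (t * t') := by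
  intro x hx
  rw [hact t t' x, ht x hx, ht' x hx]

lemma rig_image {t : Γ} (ht : Rig ρ W t) : ρ t '' W = W := by
  ext z
  constructor
  · rintro ⟨x, hx, rfl⟩
    exact rig_mem ρ ht hx
  · intro hz
    exact ⟨ρ t⁻¹ z, rig_mem ρ (rig_inv ρ hact ht) hz, act_inv_right ρ hact t z⟩

end Act

/-! ### The sets appearing in the statement -/

section Defs

variable (ρ : Γ → (X ≃ₜ X)) (U V : Set X)

/-- The property defining the subgroup `S(H)` of `R_Γ(U)`:
`t` is rigid on `U` and its restriction to `U` agrees with some `h ∈ H` preserving `U`. -/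
def SP (H : Subgroup Γ) (t : Γ) : Prop :=
  (∀ x ∉ U, ρ t x = x) ∧ ∃ h ∈ H, ρ h '' U = U ∧ ∀ x ∈ U, ρ t x = ρ h x

/-- The right coset `S(H) * g`. -/
def coset (H : Subgroup Γ) (g : Γ) : Set Γ := {y | ∃ t, SP ρ U H t ∧ y = t * g}

/-- The family of cosets `{S(H) g : g ∈ R_Γ(U)}`. -/
def fam (H : Subgroup Γ) : Set (Set Γ) :=
  {C | ∃ g, (∀ x ∉ U, ρ g x = x) ∧ C = coset ρ U H g}

/-- The event that `H` contains an element mapping `U` to `V` whose restriction to `U`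
agrees with that of a given word `w`. -/
def AP (w : Γ) (H : Subgroup Γ) : Prop :=
  ∃ h ∈ H, ρ h '' U = V ∧ ∀ x ∈ U, ρ h x = ρ w x

def APEv (w : Γ) : Set (Subgroup Γ) := {H | AP ρ U V w H}

def SPEv (t : Γ) : Set (Subgroup Γ) := {H | SP ρ U H t}

def CEv : Set (Subgroup Γ) := {H | ¬ (fam ρ U H).Finite}

def DEv (F : Finset Γ) : Set (Subgroup Γ) :=
  {H | ∀ r ∈ F, ∀ r' ∈ F, r ≠ r' → ¬ SP ρ U H (r' * r⁻¹)}

end Defs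

/-! ### Closure properties of `SP` and coset combinatorics -/

section SPLemmas

variable (ρ : Γ → (X ≃ₜ X)) (hact : ∀ g h : Γ, ∀ x : X, ρ (g * h) x = ρ h (ρ g x))
variable {U V : Set X} {H : Subgroup Γ}

include hact

lemma SP_one : SP ρ U H 1 := by
  refine ⟨fun x _ => act_one ρ hact x, 1, one_mem _, ?_, fun x _ => rfl⟩
  have : ∀ x, ρ (1 : Γ) x = x := act_one ρ hact
  ext z
  constructor
  · rintro ⟨x, hx, rfl⟩; rwa [this x]
  · intro hz; exact ⟨z, hz, this z⟩

lemma SP_mul {t t' : Γ} (h1 : SP ρ U H t) (h2 : SP ρ U H t') : SP ρ U H (t * t') := by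
  obtain ⟨hrig, k, hk, him, hpt⟩ := h1
  obtain ⟨hrig', k', hk', him', hpt'⟩ := h2
  have hmem : ∀ x ∈ U, ρ t x ∈ U := fun x hx => rig_mem ρ hrig hx
  have key : ∀ x ∈ U, ρ (t * t') x = ρ (k * k') x := by
    intro x hx
    rw [hact t t' x, hact k k' x, hpt x hx]
    exact hpt' _ (him ▸ Set.mem_image_of_mem _ hx)
  refine ⟨rig_mul ρ hact hrig hrig', k * k', mul_mem hk hk', ?_, key⟩
  have : ρ (k * k') '' U = ρ (t * t') '' U := Set.image_congr fun x hx => (key x hx).symm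
  rw [this]
  exact rig_image ρ hact (rig_mul ρ hact hrig hrig')

lemma SP_inv {t : Γ} (h1 : SP ρ U H t) : SP ρ U H t⁻¹ := by
  obtain ⟨hrig, k, hk, him, hpt⟩ := h1
  have key : ∀ x ∈ U, ρ t⁻¹ x = ρ k⁻¹ x := by
    intro x hx
    have hy : ρ t⁻¹ x ∈ U := rig_mem ρ (rig_inv ρ hact hrig) hx
    have h2 : ρ t (ρ t⁻¹ x) = x := act_inv_right ρ hact t x
    have h3 : ρ k (ρ t⁻¹ x) = x := by rw [← hpt _ hy]; exact h2
    calc ρ t⁻¹ x = ρ k⁻¹ (ρ k (ρ t⁻¹ x)) := (act_inv_left ρ hact k _).symm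
      _ = ρ k⁻¹ x := by rw [h3]
  refine ⟨rig_inv ρ hact hrig, k⁻¹, inv_mem hk, ?_, key⟩
  have : ρ k⁻¹ '' U = ρ t⁻¹ '' U := Set.image_congr fun x hx => (key x hx).symm
  rw [this]
  exact rig_image ρ hact (rig_inv ρ hact hrig)

lemma self_mem_coset (g : Γ) : g ∈ coset ρ U H g :=
  ⟨1, SP_one ρ hact, (one_mul g).symm⟩

lemma coset_eq_of_SP {g g' : Γ} (hsp : SP ρ U H (g' * g⁻¹)) :
    coset ρ U H g = coset ρ U H g' := by
  have hsp' : SP ρ U H (g * g'⁻¹) := by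
    have := SP_inv ρ hact hsp
    rwa [mul_inv_rev, inv_inv] at this
  ext y
  constructor
  · rintro ⟨t, ht, rfl⟩
    exact ⟨t * (g * g'⁻¹), SP_mul ρ hact ht hsp', by group⟩
  · rintro ⟨t, ht, rfl⟩
    exact ⟨t * (g' * g⁻¹), SP_mul ρ hact ht hsp, by group⟩

lemma SP_of_coset_eq {g g' : Γ} (h : coset ρ U H g = coset ρ U H g') :
    SP ρ U H (g' * g⁻¹) := by
  have : g' ∈ coset ρ U H g := h ▸ self_mem_coset ρ hact g'
  obtain ⟨t, ht, he⟩ := this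
  have : g' * g⁻¹ = t := by rw [he]; group
  rwa [this]

end SPLemmas

/-! ### Facts about a fixed element `γf` with `ρ γf '' U = V` -/

section Gamma

variable (ρ : Γ → (X ≃ₜ X)) (hact : ∀ g h : Γ, ∀ x : X, ρ (g * h) x = ρ h (ρ g x))
variable {U V : Set X} {γf : Γ} (hγf : ρ γf '' U = V)

include hact hγf

omit hact in
lemma gamma_mem {x : X} (hx : x ∈ U) : ρ γf x ∈ V := hγf ▸ Set.mem_image_of_mem _ hx

omit hact in
lemma gamma_not_mem {x : X} (hx : x ∉ U) : ρ γf x ∉ V := by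
  intro hmem
  rw [← hγf] at hmem
  obtain ⟨u, hu, he⟩ := hmem
  rw [← (ρ γf).injective he] at hx
  exact hx hu

lemma gamma_inv_mem {x : X} (hx : x ∈ V) : ρ γf⁻¹ x ∈ U := by
  rw [← hγf] at hx
  obtain ⟨u, hu, rfl⟩ := hx
  rwa [act_inv_left ρ hact]

lemma gamma_inv_not_mem {x : X} (hx : x ∉ V) : ρ γf⁻¹ x ∉ U := by
  intro hmem
  have := gamma_mem ρ hγf hmem
  rw [act_inv_right ρ hact] at this
  exact hx this

/-- Conjugating a `V`-rigid element by `γf⁻¹` gives a `U`-rigid element. -/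
lemma rig_conj_of_rigV {c : Γ} (hc : Rig ρ V c) : Rig ρ U (γf * c * γf⁻¹) := by
  intro x hx
  rw [act_triple ρ hact, hc _ (gamma_not_mem ρ hγf hx), act_inv_left ρ hact]

/-- Conjugating a `U`-rigid element by `γf` gives a `V`-rigid element. -/
lemma rigV_conj_of_rigU {t : Γ} (ht : Rig ρ U t) : Rig ρ V (γf⁻¹ * t * γf) := by
  intro x hx
  rw [act_triple ρ hact, ht _ (gamma_inv_not_mem ρ hact hγf hx), act_inv_right ρ hact]

end Gamma

/-! ### Invariance of `SP`, `fam`, and transformation of `AP` under conjugation by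
`V`-rigid elements -/

section ConjInv

variable (ρ : Γ → (X ≃ₜ X)) (hact : ∀ g h : Γ, ∀ x : X, ρ (g * h) x = ρ h (ρ g x))
variable {U V : Set X} (hUV : Disjoint U V)

include hact hUV

omit hact in
lemma not_mem_V_of_mem_U {x : X} (hx : x ∈ U) : x ∉ V := Set.disjoint_left.mp hUV hx

/-- A key computation: for `c` rigid on `V`, `k ∈ Γ` and `x ∈ U`,
`ρ (c * k * c⁻¹) x = ρ c⁻¹ (ρ k x)`. -/
lemma act_conj_on_U {c : Γ} (hc : Rig ρ V c) (k : Γ) {x : X} (hx : x ∈ U) :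
    ρ (c * k * c⁻¹) x = ρ c⁻¹ (ρ k x) := by
  rw [act_triple ρ hact, hc x (not_mem_V_of_mem_U hUV hx)]

lemma SP_conj {c : Γ} (hc : Rig ρ V c) (H : Subgroup Γ) (t : Γ) :
    SP ρ U (conjSubgroup c H) t ↔ SP ρ U H t := by
  constructor
  · rintro ⟨hrig, h', h'mem, him', hpt'⟩
    set k := c⁻¹ * h' * c with hk
    have hkH : k ∈ H := (mem_conjSubgroup_iff c h' H).1 h'mem
    have hexp : h' = c * k * c⁻¹ := by rw [hk]; group
    have key : ∀ x ∈ U, ρ k x = ρ h' x := by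
      intro x hx
      have h1 : ρ h' x = ρ c⁻¹ (ρ k x) := by
        rw [hexp]; exact act_conj_on_U ρ hact hUV hc k hx
      have h2 : ρ h' x ∈ U := him' ▸ Set.mem_image_of_mem _ hx
      have h3 : ρ c (ρ h' x) = ρ h' x := hc _ (not_mem_V_of_mem_U hUV h2)
      calc ρ k x = ρ c (ρ c⁻¹ (ρ k x)) := (act_inv_right ρ hact c _).symm
        _ = ρ c (ρ h' x) := by rw [h1]
        _ = ρ h' x := h3
    refine ⟨hrig, k, hkH, ?_, fun x hx => by rw [hpt' x hx, key x hx]⟩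
    rw [Set.image_congr key]; exact him'
  · rintro ⟨hrig, k, hkH, him, hpt⟩
    have hmemconj : c * k * c⁻¹ ∈ conjSubgroup c H := by
      rw [mem_conjSubgroup_iff]
      have e : c⁻¹ * (c * k * c⁻¹) * c = k := by group
      rw [e]; exact hkH
    refine ⟨hrig, c * k * c⁻¹, hmemconj, ?_, ?_⟩
    · have key : ∀ x ∈ U, ρ (c * k * c⁻¹) x = ρ k x := by
        intro x hx
        rw [act_conj_on_U ρ hact hUV hc k hx]
        have h2 : ρ k x ∈ U := him ▸ Set.mem_image_of_mem _ hx
        exact (rig_inv ρ hact hc) _ (not_mem_V_of_mem_U hUV h2)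
      rw [Set.image_congr key]; exact him
    · intro x hx
      rw [act_conj_on_U ρ hact hUV hc k hx]
      have h2 : ρ k x ∈ U := him ▸ Set.mem_image_of_mem _ hx
      rw [(rig_inv ρ hact hc) _ (not_mem_V_of_mem_U hUV h2)]
      exact hpt x hx

lemma coset_conj {c : Γ} (hc : Rig ρ V c) (H : Subgroup Γ) (g : Γ) :
    coset ρ U (conjSubgroup c H) g = coset ρ U H g := by
  ext y
  unfold coset
  simp only [Set.mem_setOf_eq]
  constructor
  · rintro ⟨t, ht, rfl⟩; exact ⟨t, (SP_conj ρ hact hUV hc H t).1 ht, rfl⟩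
  · rintro ⟨t, ht, rfl⟩; exact ⟨t, (SP_conj ρ hact hUV hc H t).2 ht, rfl⟩

lemma fam_conj {c : Γ} (hc : Rig ρ V c) (H : Subgroup Γ) :
    fam ρ U (conjSubgroup c H) = fam ρ U H := by
  unfold fam
  ext C
  simp only [Set.mem_setOf_eq]
  constructor
  · rintro ⟨g, hg, rfl⟩; exact ⟨g, hg, (coset_conj ρ hact hUV hc H g).symm ▸ rfl⟩
  · rintro ⟨g, hg, rfl⟩; exact ⟨g, hg, (coset_conj ρ hact hUV hc H g).symm⟩

lemma AP_conj {c : Γ} (hc : Rig ρ V c) (H : Subgroup Γ) (w : Γ) :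
    AP ρ U V w (conjSubgroup c H) ↔ AP ρ U V (w * c) H := by
  constructor
  · rintro ⟨h', h'mem, him', hpt'⟩
    set k := c⁻¹ * h' * c with hk
    have hkH : k ∈ H := (mem_conjSubgroup_iff c h' H).1 h'mem
    have hexp : h' = c * k * c⁻¹ := by rw [hk]; group
    have key : ∀ x ∈ U, ρ k x = ρ c (ρ h' x) := by
      intro x hx
      have h1 : ρ h' x = ρ c⁻¹ (ρ k x) := by
        rw [hexp]; exact act_conj_on_U ρ hact hUV hc k hx
      rw [h1, act_inv_right ρ hact]
    refine ⟨k, hkH, ?_, ?_⟩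
    · have : ρ k '' U = (fun x => ρ c (ρ h' x)) '' U := Set.image_congr key
      rw [this]
      have : (fun x => ρ c (ρ h' x)) '' U = ρ c '' (ρ h' '' U) := by
        rw [← Set.image_comp]; rfl
      rw [this, him']
      exact rig_image ρ hact hc
    · intro x hx
      rw [key x hx, hpt' x hx, hact w c x]
  · rintro ⟨k, hkH, him, hpt⟩
    have hmemconj : c * k * c⁻¹ ∈ conjSubgroup c H := by
      rw [mem_conjSubgroup_iff]
      have e : c⁻¹ * (c * k * c⁻¹) * c = k := by group
      rw [e]; exact hkH
    refine ⟨c * k * c⁻¹, hmemconj, ?_, ?_⟩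
    · have key : ∀ x ∈ U, ρ (c * k * c⁻¹) x = ρ c⁻¹ (ρ k x) := fun x hx =>
        act_conj_on_U ρ hact hUV hc k hx
      rw [Set.image_congr key]
      have : (fun x => ρ c⁻¹ (ρ k x)) '' U = ρ c⁻¹ '' (ρ k '' U) := by
        rw [← Set.image_comp]; rfl
      rw [this, him]
      exact rig_image ρ hact (rig_inv ρ hact hc)
    · intro x hx
      rw [act_conj_on_U ρ hact hUV hc k hx, hpt x hx, hact w c x, act_inv_left ρ hact]

end ConjInv

/-! ### The pair lemma -/

section Pair

variable (ρ : Γ → (X ≃ₜ X)) (hact : ∀ g h : Γ, ∀ x : X, ρ (g * h) x = ρ h (ρ g x))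
variable {U V : Set X} {H : Subgroup Γ}

include hact

/-- If `H` contains witnesses for both `t * γf` and `t' * γf`
(with `t, t'` rigid on `U`), then `t' * t⁻¹ ∈ S(H)`. -/
lemma pair_lemma {γf t t' : Γ} (ht : Rig ρ U t) (ht' : Rig ρ U t')
    (h1 : AP ρ U V (t * γf) H) (h2 : AP ρ U V (t' * γf) H) :
    SP ρ U H (t' * t⁻¹) := by
  obtain ⟨h, hmem, him, hpt⟩ := h1
  obtain ⟨h', hmem', him', hpt'⟩ := h2
  have hrig : Rig ρ U (t' * t⁻¹) := rig_mul ρ hact ht' (rig_inv ρ hact ht)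
  have key : ∀ x ∈ U, ρ (h' * h⁻¹) x = ρ (t' * t⁻¹) x := by
    intro x hx
    set y := ρ (t' * t⁻¹) x with hy
    have hyU : y ∈ U := rig_mem ρ hrig hx
    have hty : ρ t y = ρ t' x := by
      rw [hy, hact t' t⁻¹ x, act_inv_right ρ hact]
    have hhy : ρ h y = ρ h' x := by
      rw [hpt y hyU, hpt' x hx, hact t γf y, hact t' γf x, hty]
    rw [hact h' h⁻¹ x, ← hhy, act_inv_left ρ hact]
  refine ⟨hrig, h' * h⁻¹, mul_mem hmem' (inv_mem hmem), ?_, fun x hx => (key x hx).symm⟩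
  rw [Set.image_congr key]
  exact rig_image ρ hact hrig

end Pair

/-! ### Characterization of infinitely many cosets -/

section CevIff

variable (ρ : Γ → (X ≃ₜ X)) (hact : ∀ g h : Γ, ∀ x : X, ρ (g * h) x = ρ h (ρ g x))
variable {U : Set X}

include hact

lemma cev_iff (H : Subgroup Γ) :
    ¬ (fam ρ U H).Finite ↔
      ∀ n : ℕ, ∃ F : Finset Γ, (∀ r ∈ F, Rig ρ U r) ∧ F.card = n ∧ H ∈ DEv ρ U F := by
  classical
  constructor
  · intro hinf n
    have hinf' : (fam ρ U H).Infinite := hinf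
    obtain ⟨T, hTsub, hTcard⟩ := hinf'.exists_subset_card_eq n
    classical
    set gfun : Set Γ → Γ := fun C =>
      if hC : C ∈ fam ρ U H then Classical.choose hC else 1 with hgfun
    have hspec : ∀ C ∈ fam ρ U H,
        (∀ x ∉ U, ρ (gfun C) x = x) ∧ C = coset ρ U H (gfun C) := by
      intro C hC
      have := Classical.choose_spec hC
      rw [hgfun]
      simp only [dif_pos hC]
      exact this
    have hinj : Set.InjOn gfun ↑T := by
      intro C hC C' hC' he
      have h1 := (hspec C (hTsub hC)).2
      have h2 := (hspec C' (hTsub hC')).2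
      rw [h1, h2, he]
    refine ⟨T.image gfun, ?_, ?_, ?_⟩
    · intro r hr
      obtain ⟨C, hC, rfl⟩ := Finset.mem_image.1 hr
      exact (hspec C (hTsub hC)).1
    · rw [Finset.card_image_of_injOn hinj, hTcard]
    · intro r hr r' hr' hne hsp
      obtain ⟨C, hC, rfl⟩ := Finset.mem_image.1 hr
      obtain ⟨C', hC', rfl⟩ := Finset.mem_image.1 hr'
      have hCne : C ≠ C' := fun h => hne (by rw [h])
      have := coset_eq_of_SP ρ hact hsp
      have : C = C' := by
        rw [(hspec C (hTsub hC)).2, (hspec C' (hTsub hC')).2, this]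
      exact hCne this
  · intro hall hfin
    set n := hfin.toFinset.card + 1 with hn
    obtain ⟨F, hFrig, hFcard, hFD⟩ := hall n
    have hinj : Set.InjOn (fun r => coset ρ U H r) ↑F := by
      intro r hr r' hr' he
      by_contra hne
      exact hFD r hr r' hr' hne (SP_of_coset_eq ρ hact he)
    have hsub : F.image (fun r => coset ρ U H r) ⊆ hfin.toFinset := by
      intro C hC
      obtain ⟨r, hr, rfl⟩ := Finset.mem_image.1 hC
      rw [Set.Finite.mem_toFinset]
      exact ⟨r, hFrig r hr, rfl⟩
    have := Finset.card_le_card hsub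
    rw [Finset.card_image_of_injOn hinj, hFcard, hn] at this
    omega

end CevIff

/-! ### Measurability -/

section Meas

variable [Countable Γ]

lemma measurableSet_cylinder (h : Γ) : MeasurableSet {H : Subgroup Γ | h ∈ H} :=
  MeasurableSpace.measurableSet_comap.2
    ⟨{s : Set Γ | h ∈ s}, by rw [measurableSet_setOf]; exact measurable_pi_apply h, rfl⟩

lemma measurableSet_exists_mem (P : Γ → Prop) :
    MeasurableSet {H : Subgroup Γ | ∃ h, h ∈ H ∧ P h} := by
  classical
  have : {H : Subgroup Γ | ∃ h, h ∈ H ∧ P h} = ⋃ h : Γ, {H : Subgroup Γ | h ∈ H ∧ P h} := by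
    ext H; simp
  rw [this]
  refine MeasurableSet.iUnion fun h => ?_
  by_cases hP : P h
  · have : {H : Subgroup Γ | h ∈ H ∧ P h} = {H : Subgroup Γ | h ∈ H} := by
      ext H; simp [hP]
    rw [this]; exact measurableSet_cylinder h
  · have : {H : Subgroup Γ | h ∈ H ∧ P h} = ∅ := by
      ext H; simp [hP]
    rw [this]; exact MeasurableSet.empty

variable (ρ : Γ → (X ≃ₜ X)) (U V : Set X)

lemma measurableSet_APEv (w : Γ) : MeasurableSet (APEv ρ U V w) := by
  have : APEv ρ U V w =
      {H : Subgroup Γ | ∃ h, h ∈ H ∧ (ρ h '' U = V ∧ ∀ x ∈ U, ρ h x = ρ w x)} := by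
    ext H
    simp only [APEv, AP, Set.mem_setOf_eq]
  rw [this]
  exact measurableSet_exists_mem _

lemma measurableSet_SPEv (t : Γ) : MeasurableSet (SPEv ρ U t) := by
  by_cases hr : ∀ x ∉ U, ρ t x = x
  · have : SPEv ρ U t =
        {H : Subgroup Γ | ∃ h, h ∈ H ∧ (ρ h '' U = U ∧ ∀ x ∈ U, ρ t x = ρ h x)} := by
      ext H
      simp only [SPEv, SP, Set.mem_setOf_eq]
      constructor
      · rintro ⟨_, h, hh, him, hpt⟩; exact ⟨h, hh, him, hpt⟩
      · rintro ⟨h, hh, him, hpt⟩; exact ⟨hr, h, hh, him, hpt⟩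
    rw [this]
    exact measurableSet_exists_mem _
  · have : SPEv ρ U t = ∅ := by
      ext H
      simp only [SPEv, SP, Set.mem_setOf_eq, Set.mem_empty_iff_false, iff_false]
      rintro ⟨hrig, _⟩
      exact hr hrig
    rw [this]; exact MeasurableSet.empty

lemma measurableSet_DEv (F : Finset Γ) : MeasurableSet (DEv ρ U F) := by
  have : DEv ρ U F = ⋂ r ∈ F, ⋂ r' ∈ F, ⋂ (_ : r ≠ r'), (SPEv ρ U (r' * r⁻¹))ᶜ := by
    ext H
    simp only [DEv, SPEv, Set.mem_setOf_eq, Set.mem_iInter, Set.mem_compl_iff]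
  rw [this]
  exact MeasurableSet.biInter (Set.to_countable _) fun r _ =>
    MeasurableSet.biInter (Set.to_countable _) fun r' _ =>
      MeasurableSet.iInter fun _ => (measurableSet_SPEv ρ U _).compl

lemma measurableSet_CEv (hact : ∀ g h : Γ, ∀ x : X, ρ (g * h) x = ρ h (ρ g x)) :
    MeasurableSet (CEv ρ U) := by
  have : CEv ρ U = ⋂ n : ℕ, ⋃ F : Finset Γ,
      ⋃ (_ : (∀ r ∈ F, Rig ρ U r) ∧ F.card = n), DEv ρ U F := by
    ext H
    simp only [CEv, Set.mem_setOf_eq, Set.mem_iInter, Set.mem_iUnion]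
    rw [cev_iff ρ hact H]
    constructor
    · intro h n; obtain ⟨F, h1, h2, h3⟩ := h n; exact ⟨F, ⟨h1, h2⟩, h3⟩
    · intro h n; obtain ⟨F, ⟨h1, h2⟩, h3⟩ := h n; exact ⟨F, h1, h2, h3⟩
  rw [this]
  exact MeasurableSet.iInter fun n => MeasurableSet.iUnion fun F =>
    MeasurableSet.iUnion fun _ => measurableSet_DEv ρ U F

lemma measurable_conjSubgroup (c : Γ) :
    Measurable (conjSubgroup c : Subgroup Γ → Subgroup Γ) := by
  intro s hs
  obtain ⟨s', hs', rfl⟩ := hs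
  have m : Measurable (fun H : Subgroup Γ => ((conjSubgroup c H : Set Γ))) := by
    apply measurable_pi_iff.mpr
    intro γ
    have e : {H : Subgroup Γ | γ ∈ conjSubgroup c H} = {H : Subgroup Γ | c⁻¹ * γ * c ∈ H} := by
      ext H; exact mem_conjSubgroup_iff c γ H
    exact measurableSet_setOf.1 (e ▸ measurableSet_cylinder (c⁻¹ * γ * c))
  exact m hs'

end Meas

/-! ### Preimages of the events under conjugation -/

section Preimages

variable (ρ : Γ → (X ≃ₜ X)) (hact : ∀ g h : Γ, ∀ x : X, ρ (g * h) x = ρ h (ρ g x))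
variable {U V : Set X} (hUV : Disjoint U V)

include hact hUV

lemma preimage_APEv {c : Γ} (hc : Rig ρ V c) (w : Γ) :
    conjSubgroup c ⁻¹' (APEv ρ U V w) = APEv ρ U V (w * c) := by
  ext H
  simp only [Set.mem_preimage, APEv, Set.mem_setOf_eq]
  exact AP_conj ρ hact hUV hc H w

lemma preimage_CEv {c : Γ} (hc : Rig ρ V c) :
    conjSubgroup c ⁻¹' (CEv ρ U) = CEv ρ U := by
  ext H
  simp only [Set.mem_preimage, CEv, Set.mem_setOf_eq]
  rw [fam_conj ρ hact hUV hc H]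

lemma preimage_DEv {c : Γ} (hc : Rig ρ V c) (F : Finset Γ) :
    conjSubgroup c ⁻¹' (DEv ρ U F) = DEv ρ U F := by
  ext H
  simp only [Set.mem_preimage, DEv, Set.mem_setOf_eq]
  constructor
  · intro h r hr r' hr' hne hsp
    exact h r hr r' hr' hne ((SP_conj ρ hact hUV hc H _).2 hsp)
  · intro h r hr r' hr' hne hsp
    exact h r hr r' hr' hne ((SP_conj ρ hact hUV hc H _).1 hsp)

end Preimages


/-! ### The invariant σ-algebra and the conditional-expectation argument -/

section MeasureCore

variable [Countable Γ]
variable (ρ : Γ → (X ≃ₜ X))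

/-- The σ-algebra of measurable sets invariant under conjugation by all `V`-rigid
elements. -/
def invSigma (V : Set X) : MeasurableSpace (Subgroup Γ) where
  MeasurableSet' B := MeasurableSet B ∧ ∀ c : Γ, Rig ρ V c → conjSubgroup c ⁻¹' B = B
  measurableSet_empty := ⟨MeasurableSet.empty, fun _ _ => by simp⟩
  measurableSet_compl := fun B hB => ⟨hB.1.compl, fun c hc => by
    rw [Set.preimage_compl, hB.2 c hc]⟩
  measurableSet_iUnion := fun f hf => ⟨MeasurableSet.iUnion fun i => (hf i).1, fun c hc => by
    rw [Set.preimage_iUnion]; exact Set.iUnion_congr fun i => (hf i).2 c hc⟩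

lemma invSigma_le (V : Set X) : invSigma ρ V ≤ subgroupMeasurableSpace := fun _ hB => hB.1

variable {V : Set X} (μ : Measure (Subgroup Γ)) (hμ : IsIRS μ)

include hμ

lemma measure_preimage_conj (c : Γ) {B : Set (Subgroup Γ)} (hB : MeasurableSet B) :
    μ (conjSubgroup c ⁻¹' B) = μ B := by
  conv_rhs => rw [← hμ.2 c]
  rw [Measure.map_apply (measurable_conjSubgroup c) hB]

omit hμ in
lemma setIntegral_indicator_one {B s : Set (Subgroup Γ)} (hB : MeasurableSet B) :
    ∫ H in s, B.indicator (fun _ => (1 : ℝ)) H ∂μ = (μ (B ∩ s)).toReal := by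
  rw [integral_indicator_const (1 : ℝ) hB, measureReal_def, Measure.restrict_apply hB, smul_eq_mul, mul_one]

lemma condexp_translate {c : Γ} (hc : Rig ρ V c) {B B' : Set (Subgroup Γ)}
    (hB : MeasurableSet B) (hB' : MeasurableSet B')
    (hpre : conjSubgroup c ⁻¹' B' = B) :
    μ[B.indicator (fun _ => (1 : ℝ))|invSigma ρ V]
      =ᵐ[μ] μ[B'.indicator (fun _ => (1 : ℝ))|invSigma ρ V] := by
  haveI : IsProbabilityMeasure μ := hμ.1
  haveI : SigmaFinite (μ.trim (invSigma_le ρ V)) := by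
    haveI := isFiniteMeasure_trim (μ := μ) (invSigma_le ρ V)
    infer_instance
  have hintB : Integrable (B.indicator (fun _ => (1 : ℝ))) μ :=
    (integrable_const (1 : ℝ)).indicator hB
  have hintB' : Integrable (B'.indicator (fun _ => (1 : ℝ))) μ :=
    (integrable_const (1 : ℝ)).indicator hB'
  refine (ae_eq_condExp_of_forall_setIntegral_eq (μ := μ) (invSigma_le ρ V)
    (g := μ[B'.indicator (fun _ => (1 : ℝ))|invSigma ρ V]) hintB
    (fun s _ _ => integrable_condExp.integrableOn)
    (fun s hs _ => ?_) (StronglyMeasurable.aestronglyMeasurable stronglyMeasurable_condExp)).symm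
  have hs0 : MeasurableSet s := hs.1
  rw [setIntegral_condExp (invSigma_le ρ V) hintB' hs,
    setIntegral_indicator_one μ hB', setIntegral_indicator_one μ hB]
  have hkey : conjSubgroup c ⁻¹' (B' ∩ s) = B ∩ s := by
    rw [Set.preimage_inter, hpre, hs.2 c hc]
  rw [← hkey, measure_preimage_conj μ hμ c (hB'.inter hs0)]

end MeasureCore

/-! ### The main null-set lemma -/

section MainNull

variable [Countable Γ]
variable (ρ : Γ → (X ≃ₜ X)) (hact : ∀ g h : Γ, ∀ x : X, ρ (g * h) x = ρ h (ρ g x))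
variable {U V : Set X} (hUV : Disjoint U V)
variable (μ : Measure (Subgroup Γ)) (hμ : IsIRS μ)
variable {γf : Γ}

include hact hUV hμ

lemma stepA (hγf : ρ γf '' U = V) {t : Γ} (ht : Rig ρ U t) :
    μ[(CEv ρ U ∩ APEv ρ U V (t * γf)).indicator (fun _ => (1 : ℝ))|invSigma ρ V]
      =ᵐ[μ] μ[(CEv ρ U ∩ APEv ρ U V γf).indicator (fun _ => (1 : ℝ))|invSigma ρ V] := by
  have hc : Rig ρ V (γf⁻¹ * t * γf) := rigV_conj_of_rigU ρ hact hγf ht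
  have hpre : conjSubgroup (γf⁻¹ * t * γf) ⁻¹' (CEv ρ U ∩ APEv ρ U V γf)
      = CEv ρ U ∩ APEv ρ U V (t * γf) := by
    rw [Set.preimage_inter, preimage_CEv ρ hact hUV hc, preimage_APEv ρ hact hUV hc γf]
    have e : γf * (γf⁻¹ * t * γf) = t * γf := by group
    rw [e]
  exact condexp_translate ρ μ hμ hc
    ((measurableSet_CEv ρ U hact).inter (measurableSet_APEv ρ U V (t * γf)))
    ((measurableSet_CEv ρ U hact).inter (measurableSet_APEv ρ U V γf)) hpre

lemma stepB (hγf : ρ γf '' U = V) (F : Finset Γ) (hF : ∀ r ∈ F, Rig ρ U r) :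
    ∀ᵐ H ∂μ, H ∈ DEv ρ U F →
      (F.card : ℝ) * (μ[(CEv ρ U ∩ APEv ρ U V γf).indicator (fun _ => (1 : ℝ))|invSigma ρ V]) H ≤ 1 := by
  classical
  haveI : IsProbabilityMeasure μ := hμ.1
  haveI : SigmaFinite (μ.trim (invSigma_le ρ V)) := by
    haveI := isFiniteMeasure_trim (μ := μ) (invSigma_le ρ V)
    infer_instance
  set g : Subgroup Γ → ℝ :=
    μ[(CEv ρ U ∩ APEv ρ U V γf).indicator (fun _ => (1 : ℝ))|invSigma ρ V] with hg_def
  have hmeas : ∀ r : Γ, MeasurableSet (CEv ρ U ∩ APEv ρ U V (r * γf)) := fun r =>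
    (measurableSet_CEv ρ U hact).inter (measurableSet_APEv ρ U V (r * γf))
  have hint : ∀ r ∈ F,
      Integrable ((CEv ρ U ∩ APEv ρ U V (r * γf)).indicator (fun _ => (1 : ℝ))) μ :=
    fun r _ => (integrable_const (1 : ℝ)).indicator (hmeas r)
  set φ : Subgroup Γ → ℝ :=
    ∑ r ∈ F, (CEv ρ U ∩ APEv ρ U V (r * γf)).indicator (fun _ => (1 : ℝ)) with hφ_def
  set ψ : Subgroup Γ → ℝ :=
    fun H => 1 + (F.card : ℝ) * ((DEv ρ U F)ᶜ).indicator (fun _ => (1 : ℝ)) H with hψ_def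
  have hφint : Integrable φ μ := integrable_finset_sum' F hint
  have hDEvm : MeasurableSet[invSigma ρ V] (DEv ρ U F) :=
    ⟨measurableSet_DEv ρ U F, fun c hc => preimage_DEv ρ hact hUV hc F⟩
  have hψint : Integrable ψ μ := (integrable_const (1 : ℝ)).add
    (((integrable_const (1 : ℝ)).indicator (measurableSet_DEv ρ U F).compl).const_mul _)
  have hψsm : StronglyMeasurable[invSigma ρ V] ψ := by
    apply StronglyMeasurable.add stronglyMeasurable_const
    exact (stronglyMeasurable_const.indicator hDEvm.compl).const_mul _
  have hbound : φ ≤ ψ := by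
    intro H
    by_cases hH : H ∈ DEv ρ U F
    · have h1 : φ H = ((F.filter fun r => H ∈ CEv ρ U ∩ APEv ρ U V (r * γf)).card : ℝ) := by
        rw [hφ_def, Finset.sum_apply, ← Finset.sum_boole]
        apply Finset.sum_congr rfl
        intro r _
        simp [Set.indicator_apply]
      have h2 : (F.filter fun r => H ∈ CEv ρ U ∩ APEv ρ U V (r * γf)).card ≤ 1 := by
        rw [Finset.card_le_one]
        intro a ha b hb
        simp only [Finset.mem_filter] at ha hb
        by_contra hne
        exact hH a ha.1 b hb.1 hne
          (pair_lemma ρ hact (hF a ha.1) (hF b hb.1) ha.2.2 hb.2.2)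
      have h3 : ψ H = 1 := by
        simp only [hψ_def]
        rw [Set.indicator_of_notMem (by simpa using hH), mul_zero, add_zero]
      rw [h1, h3]
      exact Nat.cast_le_one.mpr (by convert h2)
    · have h1 : φ H ≤ (F.card : ℝ) := by
        simp only [hφ_def, Finset.sum_apply]
        calc ∑ r ∈ F, (CEv ρ U ∩ APEv ρ U V (r * γf)).indicator (fun _ => (1 : ℝ)) H
            ≤ ∑ _r ∈ F, (1 : ℝ) := by
              apply Finset.sum_le_sum
              intro r _
              rw [Set.indicator_apply]
              split <;> norm_num
          _ = (F.card : ℝ) := by rw [Finset.sum_const, nsmul_eq_mul, mul_one]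
      have h2 : ψ H = 1 + (F.card : ℝ) := by
        simp only [hψ_def]
        rw [Set.indicator_of_mem (by simpa using hH), mul_one]
      rw [h2]
      linarith
  have e1 : μ[φ|invSigma ρ V] =ᵐ[μ]
      ∑ r ∈ F, μ[(CEv ρ U ∩ APEv ρ U V (r * γf)).indicator (fun _ => (1 : ℝ))|invSigma ρ V] :=
    condExp_finsetSum hint (invSigma ρ V)
  have e2 : ∀ᵐ H ∂μ, ∀ r ∈ (↑F : Set Γ),
      (μ[(CEv ρ U ∩ APEv ρ U V (r * γf)).indicator (fun _ => (1 : ℝ))|invSigma ρ V]) H = g H := by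
    rw [MeasureTheory.ae_ball_iff F.countable_toSet]
    intro r hr
    have := stepA ρ hact hUV μ hμ hγf (hF r hr)
    exact this.mono fun H hH => hH
  have e3 : μ[φ|invSigma ρ V] ≤ᵐ[μ] μ[ψ|invSigma ρ V] := condExp_mono hφint hψint (Filter.Eventually.of_forall hbound)
  have e4 : μ[ψ|invSigma ρ V] = ψ := condExp_of_stronglyMeasurable (invSigma_le ρ V) hψsm hψint
  filter_upwards [e1, e2, e3] with H h1 h2 h3 hH
  have hsum : (μ[φ|invSigma ρ V]) H = (F.card : ℝ) * g H := by
    rw [h1, Finset.sum_apply]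
    rw [Finset.sum_congr rfl fun r hr => h2 r (Finset.mem_coe.2 hr)]
    rw [Finset.sum_const, nsmul_eq_mul]
  have hend : (μ[ψ|invSigma ρ V]) H = 1 := by
    rw [e4]
    simp only [hψ_def]
    rw [Set.indicator_of_notMem (by simpa using hH), mul_zero, add_zero]
  calc (F.card : ℝ) * g H = (μ[φ|invSigma ρ V]) H := hsum.symm
    _ ≤ (μ[ψ|invSigma ρ V]) H := h3
    _ = 1 := hend

lemma main_null (hγf : ρ γf '' U = V) : μ (CEv ρ U ∩ APEv ρ U V γf) = 0 := by
  classical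
  haveI : IsProbabilityMeasure μ := hμ.1
  haveI : SigmaFinite (μ.trim (invSigma_le ρ V)) := by
    haveI := isFiniteMeasure_trim (μ := μ) (invSigma_le ρ V)
    infer_instance
  set g : Subgroup Γ → ℝ :=
    μ[(CEv ρ U ∩ APEv ρ U V γf).indicator (fun _ => (1 : ℝ))|invSigma ρ V] with hg_def
  have hBmeas : MeasurableSet (CEv ρ U ∩ APEv ρ U V γf) :=
    (measurableSet_CEv ρ U hact).inter (measurableSet_APEv ρ U V γf)
  have hintB : Integrable ((CEv ρ U ∩ APEv ρ U V γf).indicator (fun _ => (1 : ℝ))) μ :=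
    (integrable_const (1 : ℝ)).indicator hBmeas
  have hCEvm : MeasurableSet[invSigma ρ V] (CEv ρ U) :=
    ⟨measurableSet_CEv ρ U hact, fun c hc => preimage_CEv ρ hact hUV hc⟩
  have hnn : 0 ≤ᵐ[μ] g := condExp_nonneg (Filter.Eventually.of_forall fun H =>
    Set.indicator_nonneg (fun _ _ => zero_le_one) H)
  have hall : ∀ᵐ H ∂μ, ∀ F : Finset Γ,
      (∀ r ∈ F, Rig ρ U r) → (H ∈ DEv ρ U F → (F.card : ℝ) * g H ≤ 1) := by
    rw [ae_all_iff]
    intro F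
    by_cases hF : ∀ r ∈ F, Rig ρ U r
    · exact (stepB ρ hact hUV μ hμ hγf F hF).mono fun H h _ hD => h hD
    · exact Filter.Eventually.of_forall fun H hF' => absurd hF' hF
  have hCzero : ∀ᵐ H ∂μ, H ∈ CEv ρ U → g H = 0 := by
    filter_upwards [hall, hnn] with H hAllF hgnn hC
    by_contra hne
    have hpos : 0 < g H := lt_of_le_of_ne hgnn (Ne.symm hne)
    obtain ⟨n, hn⟩ := exists_nat_gt (1 / g H)
    obtain ⟨F, hFrig, hFcard, hFD⟩ := (cev_iff ρ hact H).1 hC n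
    have hb := hAllF F hFrig hFD
    rw [hFcard] at hb
    rw [div_lt_iff₀ hpos] at hn
    linarith
  have hint : ∫ H, g H ∂μ = (μ (CEv ρ U ∩ APEv ρ U V γf)).toReal := by
    rw [hg_def, integral_condExp (invSigma_le ρ V),
      integral_indicator_const (1 : ℝ) hBmeas, smul_eq_mul, mul_one, measureReal_def]
  have hsplit : ∫ H in CEv ρ U, g H ∂μ + ∫ H in (CEv ρ U)ᶜ, g H ∂μ = ∫ H, g H ∂μ :=
    integral_add_compl (measurableSet_CEv ρ U hact) integrable_condExp
  have hz1 : ∫ H in CEv ρ U, g H ∂μ = 0 := by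
    have hres : ∀ᵐ H ∂μ.restrict (CEv ρ U), g H = (0 : ℝ) :=
      (ae_restrict_iff' (measurableSet_CEv ρ U hact)).2 hCzero
    calc ∫ H in CEv ρ U, g H ∂μ = ∫ H in CEv ρ U, (0 : ℝ) ∂μ := integral_congr_ae hres
      _ = 0 := integral_zero _ _
  have hz2 : ∫ H in (CEv ρ U)ᶜ, g H ∂μ = 0 := by
    rw [hg_def, setIntegral_condExp (invSigma_le ρ V) hintB hCEvm.compl,
      setIntegral_indicator_one μ hBmeas]
    have : (CEv ρ U ∩ APEv ρ U V γf) ∩ (CEv ρ U)ᶜ = ∅ := by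
      ext H; simp only [Set.mem_inter_iff, Set.mem_compl_iff, Set.mem_empty_iff_false, iff_false]
      rintro ⟨⟨h1, _⟩, h2⟩; exact h2 h1
    rw [this, measure_empty, ENNReal.toReal_zero]
  have hfin : (μ (CEv ρ U ∩ APEv ρ U V γf)).toReal = 0 := by
    rw [← hint, ← hsplit, hz1, hz2, add_zero]
  have := (ENNReal.toReal_eq_zero_iff _).1 hfin
  exact this.resolve_right (measure_ne_top μ _)

end MainNull

end Stmt0Aux

theorem stmt0 {Γ X : Type*} [Group Γ] [Countable Γ] [TopologicalSpace X]
    (ρ : Γ → (X ≃ₜ X)) (hact : ∀ g h : Γ, ∀ x : X, ρ (g * h) x = ρ h (ρ g x))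
    (hfaith : Function.Injective ρ)
    (U V : Set X) (hUo : IsOpen U) (hVo : IsOpen V)
    (hUne : U.Nonempty) (hVne : V.Nonempty) (hUV : Disjoint U V)
    (hΓUV : ∃ g : Γ, ρ g '' U = V)
    (μ : Measure (Subgroup Γ)) (hμ : IsIRS μ)
    (A : Set (U → X)) (hAfin : A.Finite)
    (hA : ∀ f ∈ A, ∃ g : Γ, ρ g '' U = V ∧ f = fun x : U => ρ g x) :
    ∀ᵐ H ∂μ,
      (∃ f ∈ A, ∃ h ∈ H, ρ h '' U = V ∧ f = fun x : U => ρ h x) →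
      Set.Finite
        {C : Set Γ | ∃ g : Γ, (∀ x ∉ U, ρ g x = x) ∧
          C = {y : Γ | ∃ t : Γ,
              ((∀ x ∉ U, ρ t x = x) ∧
                ∃ h ∈ H, ρ h '' U = U ∧ ∀ x ∈ U, ρ t x = ρ h x) ∧
              y = t * g}} := by
  classical
  haveI : Countable ↥A := hAfin.countable.to_subtype
  rw [MeasureTheory.ae_iff]
  apply measure_mono_null
    (?_ : _ ⊆ ⋃ f : ↥A,
      (Stmt0Aux.CEv ρ U ∩ Stmt0Aux.APEv ρ U V (Classical.choose (hA f.1 f.2))))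
  · exact measure_iUnion_null fun f =>
      Stmt0Aux.main_null ρ hact hUV μ hμ (Classical.choose_spec (hA f.1 f.2)).1
  · intro H hH
    simp only [Set.mem_setOf_eq] at hH
    rw [Classical.not_imp] at hH
    obtain ⟨⟨f, hfA, h, hhH, him, hfe⟩, hnf⟩ := hH
    refine Set.mem_iUnion.2 ⟨⟨f, hfA⟩, ?_, ?_⟩
    · exact hnf
    · refine ⟨h, hhH, him, fun x hx => ?_⟩
      have h1 := congrFun hfe ⟨x, hx⟩
      have h2 := congrFun (Classical.choose_spec (hA f hfA)).2 ⟨x, hx⟩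
      rw [h1] at h2
      exact h2
end

section
/- Let Γ be a countable group acting faithfully on the right by homeomorphisms on a topological space X, let U and V be disjoint nonempty open subsets of X such that Γ_{U→V} ≠ ∅, and let μ be an invariant random subgroup of Γ. Then for every finite subset A of the set of partial homeomorphisms Γ̄_{U→V}, the probability under μ that a random subgroup H satisfies H̄_{U→V} ∩ A ≠ ∅ is at most the μ-expectation of min{ |A| / [R_Γ(U) : H̄_{U→U} ∩ R_Γ(U)] , 1 } · 1_{Ω_{U,V}}(H), where Ω_{U,V} = {H ∈ Sub(Γ) : H_{U→V} ≠ ∅} and the index [R_Γ(U) : H̄_{U→U} ∩ R_Γ(U)] is computed with both groups viewed as groups of homeomorphisms of U (with the convention that |A| divided by an infinite index is 0). -/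
open MeasureTheory
open scoped ENNReal

theorem mem_conjSubgroup {Γ : Type*} [Group Γ] {g t : Γ} {H : Subgroup Γ} :
    t ∈ conjSubgroup g H ↔ g⁻¹ * t * g ∈ H := by
  unfold conjSubgroup
  rw [Subgroup.mem_map]
  constructor
  · rintro ⟨x, hx, hxe⟩
    simp only [MulEquiv.coe_toMonoidHom, MulAut.conj_apply] at hxe
    have hxx : g⁻¹ * (g * x * g⁻¹) * g = x := by group
    rw [← hxe, hxx]
    exact hx
  · intro hx
    refine ⟨g⁻¹ * t * g, hx, ?_⟩
    simp only [MulEquiv.coe_toMonoidHom, MulAut.conj_apply]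
    group

theorem conjSubgroup_one {Γ : Type*} [Group Γ] (H : Subgroup Γ) :
    conjSubgroup (1 : Γ) H = H := by
  ext t
  rw [mem_conjSubgroup]
  simp

theorem conjSubgroup_mul {Γ : Type*} [Group Γ] (a b : Γ) (H : Subgroup Γ) :
    conjSubgroup a (conjSubgroup b H) = conjSubgroup (a * b) H := by
  ext t
  rw [mem_conjSubgroup, mem_conjSubgroup, mem_conjSubgroup]
  have h : b⁻¹ * (a⁻¹ * t * a) * b = (a * b)⁻¹ * t * (a * b) := by group
  rw [h]

theorem conjSubgroup_inv_cancel {Γ : Type*} [Group Γ] (g : Γ) (H : Subgroup Γ) :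
    conjSubgroup g (conjSubgroup g⁻¹ H) = H := by
  rw [conjSubgroup_mul, mul_inv_cancel, conjSubgroup_one]

theorem conjSubgroup_cancel_inv {Γ : Type*} [Group Γ] (g : Γ) (H : Subgroup Γ) :
    conjSubgroup g⁻¹ (conjSubgroup g H) = H := by
  rw [conjSubgroup_mul, inv_mul_cancel, conjSubgroup_one]

section IRSAux

variable {Γ X : Type*} [Group Γ] [TopologicalSpace X]

/-- rigid stabilizer as a set -/
def Rset (ρ : Γ → (X ≃ₜ X)) (U : Set X) : Set Γ := {g | ∀ x ∉ U, ρ g x = x}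

/-- elements of Γ acting like some `h ∈ H` with `ρ h '' U = U` on `U` and trivially outside -/
def LHset (ρ : Γ → (X ≃ₜ X)) (U : Set X) (H : Subgroup Γ) : Set Γ :=
  {t | (∀ x ∉ U, ρ t x = x) ∧ ∃ h ∈ H, ρ h '' U = U ∧ ∀ x ∈ U, ρ t x = ρ h x}

/-- the set of right cosets of `LHset` by elements of `Rset` -/
def cosetSet (ρ : Γ → (X ≃ₜ X)) (U : Set X) (H : Subgroup Γ) : Set (Set Γ) :=
  {C | ∃ g : Γ, g ∈ Rset ρ U ∧ C = {y | ∃ t ∈ LHset ρ U H, y = t * g}}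

variable {ρ : Γ → (X ≃ₜ X)} {U V : Set X}
variable (hact : ∀ g h : Γ, ∀ x : X, ρ (g * h) x = ρ h (ρ g x))

include hact

lemma rho_one (x : X) : ρ 1 x = x := by
  have h := hact 1 1 x
  rw [one_mul] at h
  exact ((ρ 1).injective h.symm)

lemma rho_inv_right (g : Γ) (x : X) : ρ g (ρ g⁻¹ x) = x := by
  have h := hact g⁻¹ g x
  rw [inv_mul_cancel] at h
  rw [← h, rho_one hact]

lemma rho_inv_left (g : Γ) (x : X) : ρ g⁻¹ (ρ g x) = x := by
  have h := hact g g⁻¹ x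
  rw [mul_inv_cancel] at h
  rw [← h, rho_one hact]

lemma rho_image_mul (a b : Γ) (s : Set X) : ρ (a * b) '' s = ρ b '' (ρ a '' s) := by
  rw [← Set.image_comp]
  exact Set.image_congr' (fun x => hact a b x)

lemma rho_inv_image (g : Γ) {s t : Set X} (h : ρ g '' s = t) : ρ g⁻¹ '' t = s := by
  subst h
  ext x
  constructor
  · rintro ⟨y, ⟨z, hz, rfl⟩, rfl⟩
    rwa [rho_inv_left hact]
  · intro hx
    exact ⟨ρ g x, ⟨x, hx, rfl⟩, rho_inv_left hact g x⟩

omit hact in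
lemma Rset_image {g : Γ} (hg : g ∈ Rset ρ U) : ρ g '' U = U := by
  apply subset_antisymm
  · rintro _ ⟨x, hx, rfl⟩
    by_contra hxo
    have h1 : ρ g (ρ g x) = ρ g x := hg _ hxo
    have h2 := (ρ g).injective h1
    rw [h2] at hxo
    exact hxo hx
  · intro y hy
    by_cases hx : (ρ g).symm y ∈ U
    · exact ⟨_, hx, (ρ g).apply_symm_apply y⟩
    · have h1 := hg _ hx
      rw [(ρ g).apply_symm_apply y] at h1
      rw [← h1] at hx
      exact absurd hy hx

include hact

lemma Rset_one' : (1 : Γ) ∈ Rset ρ U := fun x _ => rho_one hact x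

lemma Rset_mul {g h : Γ} (hg : g ∈ Rset ρ U) (hh : h ∈ Rset ρ U) :
    g * h ∈ Rset ρ U := by
  intro x hx
  rw [hact, hg x hx, hh x hx]

lemma Rset_inv {g : Γ} (hg : g ∈ Rset ρ U) : g⁻¹ ∈ Rset ρ U := by
  intro x hx
  conv_lhs => rw [← hg x hx]
  exact rho_inv_left hact g x

omit hact in
lemma LHset_subset (H : Subgroup Γ) : LHset ρ U H ⊆ Rset ρ U := fun _ ht => ht.1

lemma LHset_one (H : Subgroup Γ) : (1 : Γ) ∈ LHset ρ U H := by
  refine ⟨fun x _ => rho_one hact x, 1, H.one_mem, ?_, fun x _ => rfl⟩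
  rw [show ⇑(ρ (1 : Γ)) = id from funext (rho_one hact), Set.image_id]

lemma LHset_mul {H : Subgroup Γ} {t1 t2 : Γ} (h1 : t1 ∈ LHset ρ U H)
    (h2 : t2 ∈ LHset ρ U H) : t1 * t2 ∈ LHset ρ U H := by
  obtain ⟨hr1, h1', hm1, hi1, he1⟩ := h1
  obtain ⟨hr2, h2', hm2, hi2, he2⟩ := h2
  refine ⟨Rset_mul hact hr1 hr2, h1' * h2', H.mul_mem hm1 hm2, ?_, ?_⟩
  · rw [rho_image_mul hact, hi1, hi2]
  · intro x hx
    rw [hact, hact, he1 x hx, he2 _ (hi1 ▸ Set.mem_image_of_mem _ hx)]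

lemma LHset_inv {H : Subgroup Γ} {t : Γ} (h : t ∈ LHset ρ U H) :
    t⁻¹ ∈ LHset ρ U H := by
  obtain ⟨hr, h', hm, hi, he⟩ := h
  refine ⟨Rset_inv hact hr, h'⁻¹, H.inv_mem hm, rho_inv_image hact h' hi, ?_⟩
  intro x hx
  have hy : ρ h'⁻¹ x ∈ U := (rho_inv_image hact h' hi) ▸ Set.mem_image_of_mem _ hx
  have hxx : ρ t (ρ h'⁻¹ x) = x := by rw [he _ hy, rho_inv_right hact]
  calc ρ t⁻¹ x = ρ t⁻¹ (ρ t (ρ h'⁻¹ x)) := by rw [hxx]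
  _ = ρ h'⁻¹ x := rho_inv_left hact t _

lemma LHset_conj {r : Γ} (hr : r ∈ Rset ρ U) {t : Γ} {H : Subgroup Γ}
    (ht : t ∈ LHset ρ U H) : r * t * r⁻¹ ∈ LHset ρ U (conjSubgroup r H) := by
  obtain ⟨hrt, h, hm, hi, he⟩ := ht
  refine ⟨Rset_mul hact (Rset_mul hact hr hrt) (Rset_inv hact hr), r * h * r⁻¹, ?_, ?_, ?_⟩
  · rw [mem_conjSubgroup]
    have hh : r⁻¹ * (r * h * r⁻¹) * r = h := by group
    rw [hh]; exact hm
  · have himg : ⇑(ρ (r * h * r⁻¹)) '' U = ⇑(ρ r⁻¹) '' (⇑(ρ h) '' (⇑(ρ r) '' U)) := by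
      rw [rho_image_mul hact (r * h) r⁻¹, rho_image_mul hact r h]
    rw [himg, Rset_image hr, hi, Rset_image (Rset_inv hact hr)]
  · intro x hx
    rw [hact (r * t) r⁻¹, hact r t, hact (r * h) r⁻¹, hact r h]
    congr 1
    exact he _ ((Rset_image hr) ▸ Set.mem_image_of_mem _ hx)

lemma LHset_conj_iff {r : Γ} (hr : r ∈ Rset ρ U) {t : Γ} {H : Subgroup Γ} :
    t ∈ LHset ρ U (conjSubgroup r H) ↔ r⁻¹ * t * r ∈ LHset ρ U H := by
  constructor
  · intro ht
    have h2 := LHset_conj hact (Rset_inv hact hr) ht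
    rwa [inv_inv, conjSubgroup_cancel_inv] at h2
  · intro ht
    have h2 := LHset_conj hact hr ht
    have hh : r * (r⁻¹ * t * r) * r⁻¹ = t := by group
    rwa [hh] at h2

/-- the set `Ω` of subgroups containing an element mapping `U` to `V` -/
def OmegaSet (ρ : Γ → (X ≃ₜ X)) (U V : Set X) : Set (Subgroup Γ) :=
  {H | ∃ h ∈ H, ρ h '' U = V}

/-- the "bad" event -/
def SdSet (ρ : Γ → (X ≃ₜ X)) (U V : Set X) (A : Set (↥U → X)) : Set (Subgroup Γ) :=
  {H | ∃ f ∈ A, ∃ h ∈ H, ρ h '' U = V ∧ f = fun x : U => ρ h x}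

/-- minimal representatives of right cosets of `LHset` -/
def psiSet (ρ : Γ → (X ≃ₜ X)) (U : Set X) (e : Γ → ℕ) (H : Subgroup Γ) : Set Γ :=
  {g | g ∈ Rset ρ U ∧ ∀ t ∈ LHset ρ U H, e g ≤ e (t * g)}

/-- minimal representatives of left cosets of `LHset` -/
def cSet (ρ : Γ → (X ≃ₜ X)) (U : Set X) (e : Γ → ℕ) (H : Subgroup Γ) : Set Γ :=
  {g | g ∈ Rset ρ U ∧ ∀ l ∈ LHset ρ U H, e g ≤ e (g * l)}

variable {e : Γ → ℕ}

lemma mem_cSet_conj_iff {g : Γ} (hg : g ∈ Rset ρ U) (H : Subgroup Γ) :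
    g ∈ cSet ρ U e (conjSubgroup g⁻¹ H) ↔ g ∈ psiSet ρ U e H := by
  simp only [cSet, psiSet, Set.mem_setOf_eq, hg, true_and]
  constructor
  · intro hc t ht
    have hl : g⁻¹ * t * g ∈ LHset ρ U (conjSubgroup g⁻¹ H) := by
      rw [LHset_conj_iff hact (Rset_inv hact hg)]
      have hh : g⁻¹⁻¹ * (g⁻¹ * t * g) * g⁻¹ = t := by group
      rwa [hh]
    have := hc _ hl
    have hh2 : g * (g⁻¹ * t * g) = t * g := by group
    rwa [hh2] at this
  · intro hp l hl
    rw [LHset_conj_iff hact (Rset_inv hact hg)] at hl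
    have := hp _ hl
    have hh : g⁻¹⁻¹ * l * g⁻¹ * g = g * l := by group
    rwa [hh] at this

lemma psiSet_encard (hinj : Function.Injective e) (H : Subgroup Γ) :
    (psiSet ρ U e H).encard = (cosetSet ρ U H).encard := by
  have himg : (fun g => {y | ∃ t ∈ LHset ρ U H, y = t * g}) '' psiSet ρ U e H
      = cosetSet ρ U H := by
    apply subset_antisymm
    · rintro _ ⟨g, hg, rfl⟩
      exact ⟨g, hg.1, rfl⟩
    · rintro C ⟨g, hg, rfl⟩
      -- pick minimal element of the coset
      set C0 : Set Γ := {y | ∃ t ∈ LHset ρ U H, y = t * g} with hC0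
      have hne : (e '' C0).Nonempty := ⟨e g, g, ⟨1, LHset_one hact H, (one_mul g).symm⟩, rfl⟩
      obtain ⟨g₀, hg₀C, hg₀e⟩ := Nat.sInf_mem hne
      obtain ⟨l₀, hl₀, rfl⟩ := hg₀C
      refine ⟨l₀ * g, ⟨Rset_mul hact (LHset_subset H hl₀) hg, ?_⟩, ?_⟩
      · intro t ht
        rw [hg₀e]
        apply Nat.sInf_le
        refine ⟨t * (l₀ * g), ⟨t * l₀, LHset_mul hact ht hl₀, (mul_assoc t l₀ g).symm⟩, rfl⟩
      · ext y
        simp only [Set.mem_setOf_eq]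
        constructor
        · rintro ⟨t, ht, rfl⟩
          exact ⟨t * l₀, LHset_mul hact ht hl₀, (mul_assoc t l₀ g).symm⟩
        · rintro ⟨t, ht, rfl⟩
          refine ⟨t * l₀⁻¹, LHset_mul hact ht (LHset_inv hact hl₀), ?_⟩
          group
  have hinjOn : Set.InjOn (fun g => {y | ∃ t ∈ LHset ρ U H, y = t * g})
      (psiSet ρ U e H) := by
    intro g hg g' hg' hEq
    have hgself : g ∈ {y | ∃ t ∈ LHset ρ U H, y = t * g} :=
      ⟨1, LHset_one hact H, (one_mul g).symm⟩
    have hg'self : g' ∈ {y | ∃ t ∈ LHset ρ U H, y = t * g'} :=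
      ⟨1, LHset_one hact H, (one_mul g').symm⟩
    have hEq' : {y | ∃ t ∈ LHset ρ U H, y = t * g} = {y | ∃ t ∈ LHset ρ U H, y = t * g'} := hEq
    rw [hEq'] at hgself
    rw [← hEq'] at hg'self
    obtain ⟨t, ht, hgt⟩ := hgself
    obtain ⟨t', ht', hg't⟩ := hg'self
    have h1 : e g' ≤ e g := hgt ▸ hg'.2 t ht
    have h2 : e g ≤ e g' := hg't ▸ hg.2 t' ht'
    exact hinj (le_antisymm h2 h1)
  rw [← himg, Set.InjOn.encard_image hinjOn]

omit hact in
lemma Rset_fix_V (hUV : Disjoint U V) {r : Γ} (hr : r ∈ Rset ρ U) {x : X}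
    (hx : x ∈ V) : ρ r x = x :=
  hr x (Set.disjoint_right.mp hUV hx)

omit hact in
lemma Rset_image_V (hUV : Disjoint U V) {r : Γ} (hr : r ∈ Rset ρ U) :
    ρ r '' V = V := by
  have h1 : ρ r '' V = id '' V := Set.image_congr fun x hx => Rset_fix_V hUV hr hx
  rw [h1, Set.image_id]

lemma conj_image_iff (hUV : Disjoint U V) {g h : Γ} (hg : g ∈ Rset ρ U) :
    ρ (g * h * g⁻¹) '' U = V ↔ ρ h '' U = V := by
  have himg : ρ (g * h * g⁻¹) '' U = ρ g⁻¹ '' (ρ h '' U) := by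
    rw [rho_image_mul hact (g * h) g⁻¹, rho_image_mul hact g h, Rset_image hg]
  rw [himg]
  constructor
  · intro hW
    have := rho_inv_image hact g⁻¹ hW
    rw [inv_inv] at this
    rw [← this, Rset_image_V hUV hg]
  · intro hW
    rw [hW, Rset_image_V hUV (Rset_inv hact hg)]

lemma conj_restrict (hUV : Disjoint U V) {g h : Γ} (hg : g ∈ Rset ρ U)
    (hiV : ρ h '' U = V) {x : X} (hx : x ∈ U) :
    ρ (g * h * g⁻¹) x = ρ h (ρ g x) := by
  rw [hact (g * h) g⁻¹, hact g h]
  exact Rset_fix_V hUV (Rset_inv hact hg)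
    (hiV ▸ Set.mem_image_of_mem _ ((Rset_image hg) ▸ Set.mem_image_of_mem _ hx))

lemma conj_mem_SdSet_iff (hUV : Disjoint U V) {g : Γ} (hg : g ∈ Rset ρ U)
    (H : Subgroup Γ) {A : Set (↥U → X)} :
    conjSubgroup g H ∈ SdSet ρ U V A ↔
      ∃ f ∈ A, ∃ h ∈ H, ρ h '' U = V ∧ f = fun x : U => ρ h (ρ g (x : X)) := by
  constructor
  · rintro ⟨f, hf, h', hm', hi', rfl⟩
    refine ⟨_, hf, g⁻¹ * h' * g, mem_conjSubgroup.mp hm', ?_, ?_⟩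
    · rw [← conj_image_iff hact hUV hg]
      have hh : g * (g⁻¹ * h' * g) * g⁻¹ = h' := by group
      rwa [hh]
    · funext x
      have hh : g * (g⁻¹ * h' * g) * g⁻¹ = h' := by group
      have := conj_restrict hact hUV hg (h := g⁻¹ * h' * g) ?_ x.2
      · rw [hh] at this
        exact this
      · rw [← conj_image_iff hact hUV hg, hh]
        exact hi'
  · rintro ⟨f, hf, h, hm, hi, rfl⟩
    refine ⟨_, hf, g * h * g⁻¹, ?_, ?_, ?_⟩
    · rw [mem_conjSubgroup]
      have hh : g⁻¹ * (g * h * g⁻¹) * g = h := by group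
      rwa [hh]
    · rw [conj_image_iff hact hUV hg]
      exact hi
    · funext x
      exact (conj_restrict hact hUV hg hi x.2).symm

lemma coset_of_eq (hUV : Disjoint U V) {H : Subgroup Γ} {g g' h h' : Γ}
    (hg : g ∈ Rset ρ U) (hg' : g' ∈ Rset ρ U) (hh : h ∈ H) (hh' : h' ∈ H)
    (hiV : ρ h '' U = V) (hiV' : ρ h' '' U = V)
    (heq : ∀ x ∈ U, ρ h (ρ g x) = ρ h' (ρ g' x)) : g⁻¹ * g' ∈ LHset ρ U H := by
  refine ⟨Rset_mul hact (Rset_inv hact hg) hg', h * h'⁻¹,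
    H.mul_mem hh (H.inv_mem hh'), ?_, ?_⟩
  · rw [rho_image_mul hact h h'⁻¹, hiV, rho_inv_image hact h' hiV']
  · intro x hx
    have hxU : ρ g⁻¹ x ∈ U := (Rset_image (Rset_inv hact hg)) ▸ Set.mem_image_of_mem _ hx
    have h1 := heq _ hxU
    rw [rho_inv_right hact] at h1
    rw [hact g⁻¹ g', hact h h'⁻¹, h1, rho_inv_left hact]

lemma encard_hit_le (hUV : Disjoint U V) (hinj : Function.Injective e)
    (H : Subgroup Γ) (A : Set (↥U → X)) :
    {g | g ∈ cSet ρ U e H ∧ conjSubgroup g H ∈ SdSet ρ U V A}.encard ≤ A.encard := by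
  classical
  set B := {g | g ∈ cSet ρ U e H ∧ conjSubgroup g H ∈ SdSet ρ U V A} with hB
  have hev : ∀ g : Γ, ∃ f : ↥U → X, g ∈ B →
      f ∈ A ∧ ∃ h ∈ H, ρ h '' U = V ∧ f = fun x : U => ρ h (ρ g (x : X)) := by
    intro g
    by_cases hg : g ∈ B
    · obtain ⟨f, hf, rest⟩ := (conj_mem_SdSet_iff hact hUV hg.1.1 H).mp hg.2
      exact ⟨f, fun _ => ⟨hf, rest⟩⟩
    · exact ⟨fun x => (x : X), fun h => absurd h hg⟩
  choose φ hφ using hev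
  have hsub : φ '' B ⊆ A := by rintro _ ⟨g, hg, rfl⟩; exact (hφ g hg).1
  have hinjOn : Set.InjOn φ B := by
    intro g hg g' hg' hfe
    obtain ⟨hfA, h, hh, hiV, hfe1⟩ := hφ g hg
    obtain ⟨hfA', h', hh', hiV', hfe1'⟩ := hφ g' hg'
    have h12 : (fun x : U => ρ h (ρ g (x : X))) = fun x : U => ρ h' (ρ g' (x : X)) := by
      rw [← hfe1, ← hfe1', hfe]
    have heq : ∀ x ∈ U, ρ h (ρ g x) = ρ h' (ρ g' x) := fun x hx => congrFun h12 ⟨x, hx⟩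
    have hco : g⁻¹ * g' ∈ LHset ρ U H :=
      coset_of_eq hact hUV hg.1.1 hg'.1.1 hh hh' hiV hiV' heq
    have hco' : g'⁻¹ * g ∈ LHset ρ U H := by
      have h3 := LHset_inv hact hco
      rwa [mul_inv_rev, inv_inv] at h3
    have h1 : e g ≤ e g' := by
      have h4 := hg.1.2 _ hco
      rwa [show g * (g⁻¹ * g') = g' by group] at h4
    have h2 : e g' ≤ e g := by
      have h4 := hg'.1.2 _ hco'
      rwa [show g' * (g'⁻¹ * g) = g by group] at h4
    exact hinj (le_antisymm h1 h2)
  calc B.encard = (φ '' B).encard := (hinjOn.encard_image).symm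
  _ ≤ A.encard := Set.encard_le_encard hsub

lemma mem_Omega_of_conj (hUV : Disjoint U V) {g : Γ} (hg : g ∈ Rset ρ U)
    {H : Subgroup Γ} {A : Set (↥U → X)} (hS : conjSubgroup g H ∈ SdSet ρ U V A) :
    H ∈ OmegaSet ρ U V := by
  obtain ⟨f, _, h, hh, hiV, _⟩ := (conj_mem_SdSet_iff hact hUV hg H).mp hS
  exact ⟨h, hh, hiV⟩

omit hact in
lemma SdSet_subset_Omega (A : Set (↥U → X)) : SdSet ρ U V A ⊆ OmegaSet ρ U V := by
  rintro H ⟨f, _, h, hh, hiV, _⟩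
  exact ⟨h, hh, hiV⟩

lemma cosetSet_conj_encard {r : Γ} (hr : r ∈ Rset ρ U) (H : Subgroup Γ) :
    (cosetSet ρ U (conjSubgroup r H)).encard = (cosetSet ρ U H).encard := by
  have hptinj : Function.Injective (fun y : Γ => r * y * r⁻¹) := by
    intro a b hab
    simp only at hab
    exact mul_left_cancel (mul_right_cancel hab)
  have himg : (fun C : Set Γ => (fun y : Γ => r * y * r⁻¹) '' C) '' cosetSet ρ U H
      = cosetSet ρ U (conjSubgroup r H) := by
    apply subset_antisymm
    · rintro _ ⟨C, ⟨g, hg, rfl⟩, rfl⟩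
      refine ⟨r * g * r⁻¹, Rset_mul hact (Rset_mul hact hr hg) (Rset_inv hact hr), ?_⟩
      ext y
      constructor
      · rintro ⟨z, ⟨t, ht, rfl⟩, rfl⟩
        exact ⟨r * t * r⁻¹, LHset_conj hact hr ht, by group⟩
      · rintro ⟨t', ht', rfl⟩
        have ht : r⁻¹ * t' * r ∈ LHset ρ U H := (LHset_conj_iff hact hr).mp ht'
        exact ⟨(r⁻¹ * t' * r) * g, ⟨_, ht, rfl⟩, by group⟩
    · rintro C ⟨g', hg', rfl⟩
      refine ⟨{y | ∃ t ∈ LHset ρ U H, y = t * (r⁻¹ * g' * r)},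
        ⟨r⁻¹ * g' * r, Rset_mul hact (Rset_mul hact (Rset_inv hact hr) hg') hr, rfl⟩, ?_⟩
      ext y
      constructor
      · rintro ⟨z, ⟨t, ht, rfl⟩, rfl⟩
        exact ⟨r * t * r⁻¹, LHset_conj hact hr ht, by group⟩
      · rintro ⟨t', ht', rfl⟩
        exact ⟨(r⁻¹ * t' * r) * (r⁻¹ * g' * r), ⟨_, (LHset_conj_iff hact hr).mp ht', rfl⟩,
          by group⟩
  rw [← himg, ((Set.image_injective.mpr hptinj).injOn).encard_image]

lemma cosetSet_nonempty (H : Subgroup Γ) : (cosetSet ρ U H).Nonempty :=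
  ⟨{y | ∃ t ∈ LHset ρ U H, y = t * 1}, 1, Rset_one' hact, rfl⟩

omit hact in
lemma measurableSet_memH (t : Γ) : MeasurableSet {H : Subgroup Γ | t ∈ H} :=
  MeasurableSpace.measurableSet_comap.mpr ⟨{s : Set Γ | t ∈ s}, measurableSet_mem t, rfl⟩

omit hact in
lemma measurable_memH (t : Γ) : Measurable (fun H : Subgroup Γ => (t ∈ H : Prop)) :=
  measurableSet_setOf.mp (measurableSet_memH t)

omit hact in
lemma measurable_conjSubgroup (g : Γ) :
    Measurable (conjSubgroup g : Subgroup Γ → Subgroup Γ) := by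
  intro s hs
  obtain ⟨s', hs', rfl⟩ := MeasurableSpace.measurableSet_comap.mp hs
  have h1 : Measurable (fun H : Subgroup Γ => ((conjSubgroup g H : Set Γ))) := by
    rw [measurable_set_iff]
    intro t
    have h2 : (fun H : Subgroup Γ => (t ∈ (conjSubgroup g H : Set Γ) : Prop))
        = fun H : Subgroup Γ => (g⁻¹ * t * g ∈ H : Prop) := by
      funext H
      exact propext mem_conjSubgroup
    rw [h2]
    exact measurable_memH _
  exact h1 hs'

end IRSAux

noncomputable def pind (p : Prop) : ℝ≥0∞ := by classical exact if p then 1 else 0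

lemma pind_of {p : Prop} (h : p) : pind p = 1 := by simp [pind, h]

lemma pind_of_not {p : Prop} (h : ¬p) : pind p = 0 := by simp [pind, h]

lemma pind_le_one (p : Prop) : pind p ≤ 1 := by
  classical
  by_cases h : p <;> simp [pind, h]

lemma pind_mul_pind (p q : Prop) : pind p * pind q = pind (p ∧ q) := by
  classical
  by_cases hp : p <;> by_cases hq : q <;> simp [pind, hp, hq]

lemma indicator_eq_pind_mul {α : Type*} (s : Set α) (f : α → ℝ≥0∞) (a : α) :
    s.indicator f a = pind (a ∈ s) * f a := by
  classical
  by_cases h : a ∈ s <;> simp [pind, h]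

lemma pind_fun_eq_indicator {α : Type*} (s : Set α) :
    (fun a => pind (a ∈ s)) = s.indicator (fun _ => (1 : ℝ≥0∞)) := by
  funext a
  classical
  by_cases h : a ∈ s <;> simp [pind, h]

lemma measurable_pind_mem {α : Type*} [MeasurableSpace α] {s : Set α}
    (hs : MeasurableSet s) : Measurable (fun a => pind (a ∈ s)) := by
  rw [pind_fun_eq_indicator]
  exact measurable_const.indicator hs

lemma tsum_pind_encard {γ : Type*} (s : Set γ) :
    ∑' g : γ, pind (g ∈ s) = (s.encard : ℝ≥0∞) := by
  have h := congrFun (pind_fun_eq_indicator s)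
  calc ∑' g : γ, pind (g ∈ s) = ∑' g : γ, s.indicator (fun _ => (1 : ℝ≥0∞)) g :=
        tsum_congr h
  _ = ∑' _ : s, (1 : ℝ≥0∞) := (tsum_subtype s fun _ => (1 : ℝ≥0∞)).symm
  _ = (s.encard : ℝ≥0∞) := ENNReal.tsum_set_one s

lemma lintegral_pind_mul {α : Type*} [MeasurableSpace α] (μ : Measure α) {s : Set α}
    (hs : MeasurableSet s) (c : ℝ≥0∞) : ∫⁻ a, pind (a ∈ s) * c ∂μ = c * μ s := by
  have h : (fun a => pind (a ∈ s) * c) = s.indicator (fun _ => c) :=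
    funext fun a => (indicator_eq_pind_mul s (fun _ => c) a).symm
  rw [h, lintegral_indicator_const hs]

section IRSAux2

variable {Γ X : Type*} [Group Γ] [Countable Γ] [TopologicalSpace X]
variable {ρ : Γ → (X ≃ₜ X)} {U V : Set X} {e : Γ → ℕ}
variable (hact : ∀ g h : Γ, ∀ x : X, ρ (g * h) x = ρ h (ρ g x))

lemma measurableSet_SdSet (A : Set (↥U → X)) : MeasurableSet (SdSet ρ U V A) := by
  have h : SdSet ρ U V A = ⋃ (h : Γ), ⋃ (_ : ρ h '' U = V ∧ (fun x : U => ρ h x) ∈ A),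
      {H : Subgroup Γ | h ∈ H} := by
    ext H
    simp only [SdSet, Set.mem_setOf_eq, Set.mem_iUnion]
    constructor
    · rintro ⟨f, hf, h, hh, hi, rfl⟩
      exact ⟨h, ⟨hi, hf⟩, hh⟩
    · rintro ⟨h, ⟨hi, hf⟩, hh⟩
      exact ⟨_, hf, h, hh, hi, rfl⟩
  rw [h]
  exact MeasurableSet.iUnion fun h => MeasurableSet.iUnion fun _ => measurableSet_memH h

lemma measurableSet_Omega : MeasurableSet (OmegaSet ρ U V) := by
  have h : OmegaSet ρ U V = ⋃ (h : Γ), ⋃ (_ : ρ h '' U = V), {H : Subgroup Γ | h ∈ H} := by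
    ext H
    simp only [OmegaSet, Set.mem_setOf_eq, Set.mem_iUnion]
    constructor
    · rintro ⟨h, hh, hi⟩
      exact ⟨h, hi, hh⟩
    · rintro ⟨h, hi, hh⟩
      exact ⟨h, hh, hi⟩
  rw [h]
  exact MeasurableSet.iUnion fun h => MeasurableSet.iUnion fun _ => measurableSet_memH h

lemma measurableSet_memLH (t : Γ) : MeasurableSet {H : Subgroup Γ | t ∈ LHset ρ U H} := by
  have h : {H : Subgroup Γ | t ∈ LHset ρ U H} =
      {H : Subgroup Γ | ∀ x ∉ U, ρ t x = x} ∩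
        ⋃ (h : Γ), ⋃ (_ : ρ h '' U = U ∧ ∀ x ∈ U, ρ t x = ρ h x),
          {H : Subgroup Γ | h ∈ H} := by
    ext H
    simp only [LHset, Set.mem_setOf_eq, Set.mem_inter_iff, Set.mem_iUnion]
    constructor
    · rintro ⟨hr, h, hh, hi, he⟩
      exact ⟨hr, h, ⟨hi, he⟩, hh⟩
    · rintro ⟨hr, h, ⟨hi, he⟩, hh⟩
      exact ⟨hr, h, hh, hi, he⟩
  rw [h]
  exact (MeasurableSet.const _).inter
    (MeasurableSet.iUnion fun h => MeasurableSet.iUnion fun _ => measurableSet_memH h)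

lemma measurableSet_psi (g : Γ) :
    MeasurableSet {H : Subgroup Γ | g ∈ psiSet ρ U e H} := by
  have h : {H : Subgroup Γ | g ∈ psiSet ρ U e H} =
      {H : Subgroup Γ | g ∈ Rset ρ U} ∩
        ⋂ (t : Γ), ({H : Subgroup Γ | t ∈ LHset ρ U H}ᶜ ∪
          {H : Subgroup Γ | e g ≤ e (t * g)}) := by
    ext H
    simp only [psiSet, Set.mem_setOf_eq, Set.mem_inter_iff, Set.mem_iInter, Set.mem_union,
      Set.mem_compl_iff]
    constructor
    · rintro ⟨hr, hm⟩
      refine ⟨hr, fun t => ?_⟩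
      by_cases ht : t ∈ LHset ρ U H
      · exact Or.inr (hm t ht)
      · exact Or.inl ht
    · rintro ⟨hr, hm⟩
      refine ⟨hr, fun t ht => ?_⟩
      rcases hm t with h | h
      · exact absurd ht h
      · exact h
  rw [h]
  exact (MeasurableSet.const _).inter
    (MeasurableSet.iInter fun t =>
      ((measurableSet_memLH t).compl.union (MeasurableSet.const _)))

lemma measurableSet_cSet (g : Γ) :
    MeasurableSet {H : Subgroup Γ | g ∈ cSet ρ U e H} := by
  have h : {H : Subgroup Γ | g ∈ cSet ρ U e H} =
      {H : Subgroup Γ | g ∈ Rset ρ U} ∩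
        ⋂ (t : Γ), ({H : Subgroup Γ | t ∈ LHset ρ U H}ᶜ ∪
          {H : Subgroup Γ | e g ≤ e (g * t)}) := by
    ext H
    simp only [cSet, Set.mem_setOf_eq, Set.mem_inter_iff, Set.mem_iInter, Set.mem_union,
      Set.mem_compl_iff]
    constructor
    · rintro ⟨hr, hm⟩
      refine ⟨hr, fun t => ?_⟩
      by_cases ht : t ∈ LHset ρ U H
      · exact Or.inr (hm t ht)
      · exact Or.inl ht
    · rintro ⟨hr, hm⟩
      refine ⟨hr, fun t ht => ?_⟩
      rcases hm t with h | h
      · exact absurd ht h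
      · exact h
  rw [h]
  exact (MeasurableSet.const _).inter
    (MeasurableSet.iInter fun t =>
      ((measurableSet_memLH t).compl.union (MeasurableSet.const _)))

include hact

lemma tsum_psi (hinj : Function.Injective e) (H : Subgroup Γ) :
    ∑' g : Γ, pind (g ∈ psiSet ρ U e H) = ((cosetSet ρ U H).encard : ℝ≥0∞) := by
  rw [tsum_pind_encard, psiSet_encard hact hinj H]

lemma main_exchange (hUV : Disjoint U V) (hinj : Function.Injective e)
    (μ : Measure (Subgroup Γ)) (hμ : IsIRS μ) (A : Set (↥U → X))
    {W : Subgroup Γ → ℝ≥0∞} (hW : Measurable W)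
    (hWinv : ∀ g ∈ Rset ρ U, ∀ H : Subgroup Γ, W (conjSubgroup g H) = W H) :
    ∫⁻ H, pind (H ∈ SdSet ρ U V A) * (((cosetSet ρ U H).encard : ℝ≥0∞) * W H) ∂μ
      ≤ (A.encard : ℝ≥0∞) * ∫⁻ H, pind (H ∈ OmegaSet ρ U V) * W H ∂μ := by
  classical
  have hmc : ∀ g : Γ, Measurable (fun H : Subgroup Γ =>
      pind (g ∈ cSet ρ U e H) * (pind (conjSubgroup g H ∈ SdSet ρ U V A) * W H)) := by
    intro g
    have h1 : Measurable (fun H : Subgroup Γ => pind (conjSubgroup g H ∈ SdSet ρ U V A)) := by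
      have h2 : (fun H : Subgroup Γ => pind (conjSubgroup g H ∈ SdSet ρ U V A))
          = fun H : Subgroup Γ => pind (H ∈ conjSubgroup g ⁻¹' SdSet ρ U V A) := rfl
      rw [h2]
      exact measurable_pind_mem (measurable_conjSubgroup g (measurableSet_SdSet A))
    exact (measurable_pind_mem (measurableSet_cSet g)).mul (h1.mul hW)
  have hmψ : ∀ g : Γ, Measurable (fun H : Subgroup Γ =>
      pind (g ∈ psiSet ρ U e H) * (pind (H ∈ SdSet ρ U V A) * W H)) := fun g =>
    (measurable_pind_mem (measurableSet_psi g)).mul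
      ((measurable_pind_mem (measurableSet_SdSet A)).mul hW)
  have step1 : ∫⁻ H, pind (H ∈ SdSet ρ U V A) * (((cosetSet ρ U H).encard : ℝ≥0∞) * W H) ∂μ
      = ∑' g : Γ, ∫⁻ H, pind (g ∈ psiSet ρ U e H) *
          (pind (H ∈ SdSet ρ U V A) * W H) ∂μ := by
    rw [← lintegral_tsum (fun g => (hmψ g).aemeasurable)]
    apply lintegral_congr
    intro H
    rw [ENNReal.tsum_mul_right, tsum_psi hact hinj H]
    ring
  have step2 : ∀ g : Γ, ∫⁻ H, pind (g ∈ psiSet ρ U e H) *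
      (pind (H ∈ SdSet ρ U V A) * W H) ∂μ
      = ∫⁻ H, pind (g ∈ cSet ρ U e H) *
          (pind (conjSubgroup g H ∈ SdSet ρ U V A) * W H) ∂μ := by
    intro g
    by_cases hg : g ∈ Rset ρ U
    · have hsub : ∀ H : Subgroup Γ,
          (fun H' : Subgroup Γ => pind (g ∈ cSet ρ U e H') *
            (pind (conjSubgroup g H' ∈ SdSet ρ U V A) * W H')) (conjSubgroup g⁻¹ H)
          = pind (g ∈ psiSet ρ U e H) * (pind (H ∈ SdSet ρ U V A) * W H) := by
        intro H
        simp only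
        rw [conjSubgroup_inv_cancel, hWinv g⁻¹ (Rset_inv hact hg) H]
        congr 1
        by_cases hc : g ∈ psiSet ρ U e H
        · rw [pind_of hc, pind_of ((mem_cSet_conj_iff hact hg H).mpr hc)]
        · rw [pind_of_not hc,
            pind_of_not (fun hx => hc ((mem_cSet_conj_iff hact hg H).mp hx))]
      calc ∫⁻ H, pind (g ∈ psiSet ρ U e H) * (pind (H ∈ SdSet ρ U V A) * W H) ∂μ
          = ∫⁻ H, (fun H' : Subgroup Γ => pind (g ∈ cSet ρ U e H') *
              (pind (conjSubgroup g H' ∈ SdSet ρ U V A) * W H')) (conjSubgroup g⁻¹ H) ∂μ :=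
            lintegral_congr fun H => (hsub H).symm
        _ = ∫⁻ H, pind (g ∈ cSet ρ U e H) *
              (pind (conjSubgroup g H ∈ SdSet ρ U V A) * W H)
                ∂(μ.map (conjSubgroup g⁻¹)) :=
            (lintegral_map (hmc g) (measurable_conjSubgroup g⁻¹)).symm
        _ = ∫⁻ H, pind (g ∈ cSet ρ U e H) *
              (pind (conjSubgroup g H ∈ SdSet ρ U V A) * W H) ∂μ := by rw [hμ.2 g⁻¹]
    · apply lintegral_congr
      intro H
      rw [pind_of_not (fun hx : g ∈ psiSet ρ U e H => hg hx.1),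
        pind_of_not (fun hx : g ∈ cSet ρ U e H => hg hx.1)]
      simp
  have step3 : ∀ H : Subgroup Γ,
      ∑' g : Γ, pind (g ∈ cSet ρ U e H) * (pind (conjSubgroup g H ∈ SdSet ρ U V A) * W H)
        ≤ (A.encard : ℝ≥0∞) * (pind (H ∈ OmegaSet ρ U V) * W H) := by
    intro H
    set B := {g : Γ | g ∈ cSet ρ U e H ∧ conjSubgroup g H ∈ SdSet ρ U V A} with hB
    have h1 : ∀ g : Γ, pind (g ∈ cSet ρ U e H) *
        (pind (conjSubgroup g H ∈ SdSet ρ U V A) * W H) = pind (g ∈ B) * W H := by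
      intro g
      rw [← mul_assoc, pind_mul_pind]
      rfl
    have hBbound : (B.encard : ℝ≥0∞) ≤ (A.encard : ℝ≥0∞) * pind (H ∈ OmegaSet ρ U V) := by
      by_cases hΩ : H ∈ OmegaSet ρ U V
      · rw [pind_of hΩ, mul_one]
        exact ENat.toENNReal_le.mpr (encard_hit_le hact hUV hinj H A)
      · have hBe : B = ∅ := by
          ext g
          simp only [hB, Set.mem_setOf_eq, Set.mem_empty_iff_false, iff_false, not_and]
          intro hc hs
          exact hΩ (mem_Omega_of_conj hact hUV hc.1 hs)
        rw [hBe]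
        simp
    calc ∑' g : Γ, pind (g ∈ cSet ρ U e H) *
          (pind (conjSubgroup g H ∈ SdSet ρ U V A) * W H)
        = ∑' g : Γ, pind (g ∈ B) * W H := tsum_congr h1
      _ = (∑' g : Γ, pind (g ∈ B)) * W H := ENNReal.tsum_mul_right
      _ = (B.encard : ℝ≥0∞) * W H := by rw [tsum_pind_encard]
      _ ≤ ((A.encard : ℝ≥0∞) * pind (H ∈ OmegaSet ρ U V)) * W H :=
          mul_le_mul_left hBbound _
      _ = (A.encard : ℝ≥0∞) * (pind (H ∈ OmegaSet ρ U V) * W H) := mul_assoc _ _ _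
  calc ∫⁻ H, pind (H ∈ SdSet ρ U V A) * (((cosetSet ρ U H).encard : ℝ≥0∞) * W H) ∂μ
      = ∑' g : Γ, ∫⁻ H, pind (g ∈ psiSet ρ U e H) *
          (pind (H ∈ SdSet ρ U V A) * W H) ∂μ := step1
    _ = ∑' g : Γ, ∫⁻ H, pind (g ∈ cSet ρ U e H) *
          (pind (conjSubgroup g H ∈ SdSet ρ U V A) * W H) ∂μ := tsum_congr step2
    _ = ∫⁻ H, ∑' g : Γ, pind (g ∈ cSet ρ U e H) *
          (pind (conjSubgroup g H ∈ SdSet ρ U V A) * W H) ∂μ :=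
        (lintegral_tsum (fun g => (hmc g).aemeasurable)).symm
    _ ≤ ∫⁻ H, (A.encard : ℝ≥0∞) * (pind (H ∈ OmegaSet ρ U V) * W H) ∂μ :=
        lintegral_mono step3
    _ = (A.encard : ℝ≥0∞) * ∫⁻ H, pind (H ∈ OmegaSet ρ U V) * W H ∂μ :=
        lintegral_const_mul _ ((measurable_pind_mem measurableSet_Omega).mul hW)

lemma final_bound (hUV : Disjoint U V) (hinj : Function.Injective e)
    (μ : Measure (Subgroup Γ)) (hμ : IsIRS μ) (A : Set (↥U → X)) (hAfin : A.Finite) :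
    μ (SdSet ρ U V A) ≤ ∫⁻ H, (OmegaSet ρ U V).indicator
      (fun H' => min ((A.encard : ℝ≥0∞) / ((cosetSet ρ U H').encard : ℝ≥0∞)) 1) H ∂μ := by
  classical
  have hprob : IsProbabilityMeasure μ := hμ.1
  set N : Subgroup Γ → ℝ≥0∞ := fun H => ((cosetSet ρ U H).encard : ℝ≥0∞) with hNdef
  have hNmeas : Measurable N := by
    have h : N = fun H => ∑' g : Γ, pind (g ∈ psiSet ρ U e H) :=
      funext fun H => (tsum_psi hact hinj H).symm
    rw [h]
    exact Measurable.ennreal_tsum fun g => measurable_pind_mem (measurableSet_psi g)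
  have hN1 : ∀ H, 1 ≤ N H := by
    intro H
    rw [← ENat.toENNReal_one]
    exact ENat.toENNReal_le.mpr (Set.one_le_encard_iff_nonempty.mpr (cosetSet_nonempty hact H))
  have hN0 : ∀ H, N H ≠ 0 := fun H h0 => by
    have h := hN1 H
    rw [h0] at h
    exact absurd h (by norm_num)
  have hNinv : ∀ g ∈ Rset ρ U, ∀ H, N (conjSubgroup g H) = N H := by
    intro g hg H
    have h := cosetSet_conj_encard hact hg H
    show ((cosetSet ρ U (conjSubgroup g H)).encard : ℝ≥0∞) = _
    rw [h]
  have hAcard_ne_top : (A.encard : ℝ≥0∞) ≠ ⊤ := by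
    have h2 : (A.encard : ℝ≥0∞) < ((⊤ : ℕ∞) : ℝ≥0∞) :=
      ENat.toENNReal_lt.mpr hAfin.encard_lt_top
    rw [ENat.toENNReal_top] at h2
    exact h2.ne
  -- the three regions
  set E1 : Set (Subgroup Γ) := {H | (A.encard : ℝ≥0∞) ≤ N H ∧ N H ≠ ⊤} with hE1def
  set E2 : Set (Subgroup Γ) := {H | N H < (A.encard : ℝ≥0∞)} with hE2def
  set Einf : Set (Subgroup Γ) := {H | N H = ⊤} with hEinfdef
  have hmE1 : MeasurableSet E1 := by
    have h1 : MeasurableSet (N ⁻¹' Set.Ici (A.encard : ℝ≥0∞)) := hNmeas measurableSet_Ici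
    have h2 : MeasurableSet (N ⁻¹' {⊤} : Set (Subgroup Γ)) :=
      hNmeas (measurableSet_singleton ⊤)
    have h3 : E1 = (N ⁻¹' Set.Ici (A.encard : ℝ≥0∞)) ∩ (N ⁻¹' {⊤})ᶜ := by
      ext H
      simp [hE1def, Set.mem_Ici]
    rw [h3]
    exact h1.inter h2.compl
  have hmE2 : MeasurableSet E2 := hNmeas measurableSet_Iio
  have hmEinf : MeasurableSet Einf := hNmeas (measurableSet_singleton ⊤)
  have hmS : MeasurableSet (SdSet ρ U V A) := measurableSet_SdSet A
  have hmΩ : MeasurableSet (OmegaSet ρ U V) := measurableSet_Omega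
  -- part (i) : the infinite-index part is null
  have hinf0 : μ (SdSet ρ U V A ∩ Einf) = 0 := by
    have hWinfinv : ∀ g ∈ Rset ρ U, ∀ H : Subgroup Γ,
        pind (conjSubgroup g H ∈ Einf) = pind (H ∈ Einf) := by
      intro g hg H
      have h : (conjSubgroup g H ∈ Einf) = (H ∈ Einf) := by
        simp only [hEinfdef, Set.mem_setOf_eq, hNinv g hg H]
      rw [h]
    have hexchinf : ∫⁻ H, pind (H ∈ SdSet ρ U V A) * (N H * pind (H ∈ Einf)) ∂μ
        ≤ (A.encard : ℝ≥0∞) * ∫⁻ H, pind (H ∈ OmegaSet ρ U V) * pind (H ∈ Einf) ∂μ :=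
      main_exchange hact hUV hinj μ hμ A (measurable_pind_mem hmEinf) hWinfinv
    have hlow : ∀ H : Subgroup Γ, pind (H ∈ SdSet ρ U V A ∩ Einf) * ⊤
        ≤ pind (H ∈ SdSet ρ U V A) * (N H * pind (H ∈ Einf)) := by
      intro H
      by_cases hH : H ∈ SdSet ρ U V A ∩ Einf
      · rw [pind_of hH, pind_of hH.1, pind_of hH.2]
        have hNH : N H = ⊤ := hH.2
        rw [hNH]
        simp
      · rw [pind_of_not hH]
        simp
    have hup : ∫⁻ H, pind (H ∈ OmegaSet ρ U V) * pind (H ∈ Einf) ∂μ ≤ 1 := by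
      calc ∫⁻ H, pind (H ∈ OmegaSet ρ U V) * pind (H ∈ Einf) ∂μ ≤ ∫⁻ _, 1 ∂μ :=
          lintegral_mono fun H => mul_le_one' (pind_le_one _) (pind_le_one _)
        _ = 1 := by rw [lintegral_one, measure_univ]
    by_contra hne
    have hchain : (⊤ : ℝ≥0∞) * μ (SdSet ρ U V A ∩ Einf) ≤ (A.encard : ℝ≥0∞) := by
      calc (⊤ : ℝ≥0∞) * μ (SdSet ρ U V A ∩ Einf)
          = ∫⁻ H, pind (H ∈ SdSet ρ U V A ∩ Einf) * ⊤ ∂μ :=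
            (lintegral_pind_mul μ (hmS.inter hmEinf) ⊤).symm
        _ ≤ ∫⁻ H, pind (H ∈ SdSet ρ U V A) * (N H * pind (H ∈ Einf)) ∂μ :=
            lintegral_mono hlow
        _ ≤ (A.encard : ℝ≥0∞) * ∫⁻ H, pind (H ∈ OmegaSet ρ U V) * pind (H ∈ Einf) ∂μ :=
            hexchinf
        _ ≤ (A.encard : ℝ≥0∞) * 1 := mul_le_mul_right hup _
        _ = (A.encard : ℝ≥0∞) := mul_one _
    rw [ENNReal.top_mul hne] at hchain
    exact hAcard_ne_top (top_le_iff.mp hchain)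
  -- part (ii) : the moderate part
  set W1 : Subgroup Γ → ℝ≥0∞ := fun H => pind (H ∈ E1) * (N H)⁻¹ with hW1def
  have hW1meas : Measurable W1 := (measurable_pind_mem hmE1).mul hNmeas.inv
  have hW1inv : ∀ g ∈ Rset ρ U, ∀ H : Subgroup Γ, W1 (conjSubgroup g H) = W1 H := by
    intro g hg H
    show pind (conjSubgroup g H ∈ E1) * (N (conjSubgroup g H))⁻¹ = pind (H ∈ E1) * (N H)⁻¹
    have h : (conjSubgroup g H ∈ E1) = (H ∈ E1) := by
      simp only [hE1def, Set.mem_setOf_eq, hNinv g hg H]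
    rw [h, hNinv g hg H]
  have hexch1 : ∫⁻ H, pind (H ∈ SdSet ρ U V A) * (N H * W1 H) ∂μ
      ≤ (A.encard : ℝ≥0∞) * ∫⁻ H, pind (H ∈ OmegaSet ρ U V) * W1 H ∂μ :=
    main_exchange hact hUV hinj μ hμ A hW1meas hW1inv
  have hleft1 : ∀ H : Subgroup Γ, pind (H ∈ SdSet ρ U V A ∩ E1) * 1
      = pind (H ∈ SdSet ρ U V A) * (N H * W1 H) := by
    intro H
    rw [mul_one]
    show pind (H ∈ SdSet ρ U V A ∩ E1)
      = pind (H ∈ SdSet ρ U V A) * (N H * (pind (H ∈ E1) * (N H)⁻¹))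
    by_cases hH1 : H ∈ E1
    · rw [pind_of hH1, one_mul, ENNReal.mul_inv_cancel (hN0 H) hH1.2, mul_one]
      by_cases hHS : H ∈ SdSet ρ U V A
      · rw [pind_of hHS, pind_of (Set.mem_inter hHS hH1)]
      · rw [pind_of_not hHS,
          pind_of_not (fun hx : H ∈ SdSet ρ U V A ∩ E1 => hHS hx.1)]
    · rw [pind_of_not hH1, pind_of_not (fun hx : H ∈ SdSet ρ U V A ∩ E1 => hH1 hx.2)]
      simp
  have hre1 : ∀ H : Subgroup Γ, (A.encard : ℝ≥0∞) * (pind (H ∈ OmegaSet ρ U V) * W1 H)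
      = pind (H ∈ OmegaSet ρ U V ∩ E1) * ((A.encard : ℝ≥0∞) / N H) := by
    intro H
    show (A.encard : ℝ≥0∞) * (pind (H ∈ OmegaSet ρ U V) * (pind (H ∈ E1) * (N H)⁻¹))
      = pind (H ∈ OmegaSet ρ U V ∩ E1) * ((A.encard : ℝ≥0∞) / N H)
    rw [div_eq_mul_inv]
    calc (A.encard : ℝ≥0∞) * (pind (H ∈ OmegaSet ρ U V) * (pind (H ∈ E1) * (N H)⁻¹))
        = (pind (H ∈ OmegaSet ρ U V) * pind (H ∈ E1)) * ((A.encard : ℝ≥0∞) * (N H)⁻¹) := by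
          ring
      _ = pind (H ∈ OmegaSet ρ U V ∩ E1) * ((A.encard : ℝ≥0∞) * (N H)⁻¹) := by
          rw [pind_mul_pind]
          rfl
  have hI1 : μ (SdSet ρ U V A ∩ E1)
      ≤ ∫⁻ H, pind (H ∈ OmegaSet ρ U V ∩ E1) * ((A.encard : ℝ≥0∞) / N H) ∂μ := by
    calc μ (SdSet ρ U V A ∩ E1)
        = ∫⁻ H, pind (H ∈ SdSet ρ U V A ∩ E1) * 1 ∂μ := by
          rw [lintegral_pind_mul μ (hmS.inter hmE1) 1, one_mul]
      _ = ∫⁻ H, pind (H ∈ SdSet ρ U V A) * (N H * W1 H) ∂μ := lintegral_congr hleft1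
      _ ≤ (A.encard : ℝ≥0∞) * ∫⁻ H, pind (H ∈ OmegaSet ρ U V) * W1 H ∂μ := hexch1
      _ = ∫⁻ H, (A.encard : ℝ≥0∞) * (pind (H ∈ OmegaSet ρ U V) * W1 H) ∂μ :=
          (lintegral_const_mul _ ((measurable_pind_mem hmΩ).mul hW1meas)).symm
      _ = ∫⁻ H, pind (H ∈ OmegaSet ρ U V ∩ E1) * ((A.encard : ℝ≥0∞) / N H) ∂μ :=
          lintegral_congr hre1
  -- part (iii)
  have hI2 : μ (SdSet ρ U V A ∩ E2) ≤ ∫⁻ H, pind (H ∈ OmegaSet ρ U V ∩ E2) * 1 ∂μ := by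
    rw [lintegral_pind_mul μ (hmΩ.inter hmE2) 1, one_mul]
    exact measure_mono (Set.inter_subset_inter_left _ (SdSet_subset_Omega A))
  -- pointwise comparison with the min integrand
  have hpt : ∀ H : Subgroup Γ, pind (H ∈ OmegaSet ρ U V ∩ E2) * 1
      + pind (H ∈ OmegaSet ρ U V ∩ E1) * ((A.encard : ℝ≥0∞) / N H)
      ≤ (OmegaSet ρ U V).indicator (fun H' => min ((A.encard : ℝ≥0∞) / N H') 1) H := by
    intro H
    by_cases hΩ : H ∈ OmegaSet ρ U V
    · rw [Set.indicator_of_mem hΩ]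
      by_cases h2 : H ∈ E2
      · have hnotE1 : H ∉ E1 := fun h1 => absurd h2 (not_lt.mpr h1.1)
        rw [pind_of (Set.mem_inter hΩ h2),
          pind_of_not (fun hx : H ∈ OmegaSet ρ U V ∩ E1 => hnotE1 hx.2), one_mul,
          zero_mul, add_zero]
        refine le_min ?_ le_rfl
        have hNlt : N H < ⊤ := lt_of_lt_of_le (show N H < (A.encard : ℝ≥0∞) from h2) le_top
        rw [ENNReal.le_div_iff_mul_le (Or.inl (hN0 H)) (Or.inl hNlt.ne), one_mul]
        exact (show N H < (A.encard : ℝ≥0∞) from h2).le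
      · by_cases h1 : H ∈ E1
        · rw [pind_of_not (fun hx : H ∈ OmegaSet ρ U V ∩ E2 => h2 hx.2),
            pind_of (Set.mem_inter hΩ h1), zero_mul, zero_add, one_mul]
          refine le_min le_rfl ?_
          exact ENNReal.div_le_of_le_mul (by rw [one_mul]; exact h1.1)
        · rw [pind_of_not (fun hx : H ∈ OmegaSet ρ U V ∩ E2 => h2 hx.2),
            pind_of_not (fun hx : H ∈ OmegaSet ρ U V ∩ E1 => h1 hx.2)]
          simp
    · rw [Set.indicator_of_notMem hΩ,
        pind_of_not (fun hx : H ∈ OmegaSet ρ U V ∩ E2 => hΩ hx.1),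
        pind_of_not (fun hx : H ∈ OmegaSet ρ U V ∩ E1 => hΩ hx.1)]
      simp
  -- coverage
  have hcover : SdSet ρ U V A ⊆ (SdSet ρ U V A ∩ E2)
      ∪ ((SdSet ρ U V A ∩ E1) ∪ (SdSet ρ U V A ∩ Einf)) := by
    intro H hH
    rcases lt_or_ge (N H) (A.encard : ℝ≥0∞) with h | h
    · exact Or.inl ⟨hH, h⟩
    · by_cases ht : N H = ⊤
      · exact Or.inr (Or.inr ⟨hH, ht⟩)
      · exact Or.inr (Or.inl ⟨hH, h, ht⟩)
  calc μ (SdSet ρ U V A)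
      ≤ μ (SdSet ρ U V A ∩ E2) + (μ (SdSet ρ U V A ∩ E1) + μ (SdSet ρ U V A ∩ Einf)) :=
        (measure_mono hcover).trans ((measure_union_le _ _).trans
          (add_le_add_right (measure_union_le _ _) _))
    _ = μ (SdSet ρ U V A ∩ E2) + μ (SdSet ρ U V A ∩ E1) := by rw [hinf0, add_zero]
    _ ≤ (∫⁻ H, pind (H ∈ OmegaSet ρ U V ∩ E2) * 1 ∂μ)
        + ∫⁻ H, pind (H ∈ OmegaSet ρ U V ∩ E1) * ((A.encard : ℝ≥0∞) / N H) ∂μ :=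
        add_le_add hI2 hI1
    _ = ∫⁻ H, (pind (H ∈ OmegaSet ρ U V ∩ E2) * 1
        + pind (H ∈ OmegaSet ρ U V ∩ E1) * ((A.encard : ℝ≥0∞) / N H)) ∂μ := by
        rw [lintegral_add_left (f := fun H => pind (H ∈ OmegaSet ρ U V ∩ E2) * 1) ((measurable_pind_mem (hmΩ.inter hmE2)).mul measurable_const)]
    _ ≤ ∫⁻ H, (OmegaSet ρ U V).indicator
        (fun H' => min ((A.encard : ℝ≥0∞) / N H') 1) H ∂μ := lintegral_mono hpt

end IRSAux2


theorem stmt1 {Γ X : Type*} [Group Γ] [Countable Γ] [TopologicalSpace X]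
    (ρ : Γ → (X ≃ₜ X)) (hact : ∀ g h : Γ, ∀ x : X, ρ (g * h) x = ρ h (ρ g x))
    (hfaith : Function.Injective ρ)
    (U V : Set X) (hUo : IsOpen U) (hVo : IsOpen V)
    (hUne : U.Nonempty) (hVne : V.Nonempty) (hUV : Disjoint U V)
    (hΓUV : ∃ g : Γ, ρ g '' U = V)
    (μ : Measure (Subgroup Γ)) (hμ : IsIRS μ)
    (A : Set (U → X)) (hAfin : A.Finite)
    (hA : ∀ f ∈ A, ∃ g : Γ, ρ g '' U = V ∧ f = fun x : U => ρ g x) :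
    μ {H : Subgroup Γ | ∃ f ∈ A, ∃ h ∈ H, ρ h '' U = V ∧ f = fun x : U => ρ h x} ≤
      ∫⁻ H, Set.indicator {H' : Subgroup Γ | ∃ h ∈ H', ρ h '' U = V}
        (fun H' : Subgroup Γ =>
          min ((A.encard : ℝ≥0∞) /
            ((Set.encard
              {C : Set Γ | ∃ g : Γ, (∀ x ∉ U, ρ g x = x) ∧
                C = {y : Γ | ∃ t : Γ,
                    ((∀ x ∉ U, ρ t x = x) ∧
                      ∃ h ∈ H', ρ h '' U = U ∧ ∀ x ∈ U, ρ t x = ρ h x) ∧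
                    y = t * g}} : ℝ≥0∞)))
          1) H ∂μ := by
  obtain ⟨e, hinj⟩ := Countable.exists_injective_nat Γ
  exact final_bound hact hUV hinj μ hμ A hAfin
end

section
/- Let X be a nonempty finite set, let σ be a uniformly random permutation of X, and let U and K be nonempty subsets of X; write p = |U|/|X| and k = |K|. Then for every λ > 0, the expectation of exp(λ·|(K·σ) ∩ U|) is at most (p·e^λ + 1 − p)^k. -/
open Finset

private lemma bern_aux (q d : ℝ) (hd : 0 ≤ d) (hdq : d ≤ q) :
    ∀ j : ℕ, q ^ (j+1) - (j+1 : ℝ) * d * q ^ j ≤ (q - d) ^ (j+1) := by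
  intro j
  induction j with
  | zero => norm_num
  | succ j ih =>
    have hq0 : 0 ≤ q := le_trans hd hdq
    have hqd : 0 ≤ q - d := by linarith
    have key : q ^ (j+1+1) - ((j+1:ℕ)+1 : ℝ) * d * q ^ (j+1)
        = q * (q ^ (j+1) - (j+1 : ℝ) * d * q ^ j) - d * q ^ (j+1) := by
      push_cast; ring
    rw [key]
    by_cases hA : q ^ (j+1) - (j+1 : ℝ) * d * q ^ j ≤ 0
    · have h1 : 0 ≤ (q - d) ^ (j+1+1) := pow_nonneg hqd _
      have h2 : 0 ≤ d * q ^ (j+1) := mul_nonneg hd (pow_nonneg hq0 _)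
      have h3 : q * (q ^ (j+1) - (j+1 : ℝ) * d * q ^ j) ≤ 0 :=
        mul_nonpos_of_nonneg_of_nonpos hq0 hA
      linarith
    · push_neg at hA
      have h4 : (q ^ (j+1) - (j+1 : ℝ) * d * q ^ j) * (q - d) ≤ (q - d) ^ (j+1) * (q - d) :=
        mul_le_mul_of_nonneg_right ih hqd
      have h5 : 0 ≤ q ^ j := pow_nonneg hq0 _
      have h6 : 0 ≤ ((j:ℝ)+1) * d * d * q ^ j := by positivity
      have h7 : q * (q ^ (j+1) - (j+1 : ℝ) * d * q ^ j) - d * q ^ (j+1)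
          ≤ (q ^ (j+1) - (j+1 : ℝ) * d * q ^ j) * (q - d) := by nlinarith
      calc q * (q ^ (j+1) - (j+1 : ℝ) * d * q ^ j) - d * q ^ (j+1)
          ≤ (q ^ (j+1) - (j+1 : ℝ) * d * q ^ j) * (q - d) := h7
        _ ≤ (q - d) ^ (j+1) * (q - d) := h4
        _ = (q - d) ^ (j+1+1) := by ring

private lemma key_pow (q b : ℝ) (i : ℕ) (hq : 1 ≤ q) (hqb : q ≤ b)
    (hcond : (i : ℝ) * (b - q) ≤ q - 1) : b ^ i ≤ q ^ (i+1) := by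
  cases i with
  | zero => simpa using hq
  | succ j =>
    set d : ℝ := b - q with hdd
    have hd : 0 ≤ d := by simp only [hdd]; linarith
    have hdq1 : ((j:ℝ)+1) * d ≤ q - 1 := by push_cast at hcond ⊢; linarith
    have hdq : d ≤ q := by nlinarith
    have hq0 : (0:ℝ) < q := lt_of_lt_of_le one_pos hq
    have hqj : (0:ℝ) < q ^ j := pow_pos hq0 _
    have h1 : q ^ j ≤ (q - d) ^ (j+1) := by
      have hb := bern_aux q d hd hdq j
      have h1a : ((j:ℝ)+1) * d * q ^ j ≤ (q - 1) * q ^ j :=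
        mul_le_mul_of_nonneg_right hdq1 (le_of_lt hqj)
      have h1b : q ^ (j+1) = q * q ^ j := by ring
      nlinarith
    have hb0 : 0 ≤ b := by linarith
    have h2 : b ^ (j+1) * (q - d) ^ (j+1) ≤ (q^2) ^ (j+1) := by
      rw [← mul_pow]
      apply pow_le_pow_left₀ (by nlinarith) (by nlinarith)
    have h3 : b ^ (j+1) * q ^ j ≤ b ^ (j+1) * (q - d) ^ (j+1) :=
      mul_le_mul_of_nonneg_left h1 (pow_nonneg hb0 _)
    have h5 : b ^ (j+1) * q ^ j ≤ q ^ (j+1+1) * q ^ j := by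
      calc b ^ (j+1) * q ^ j ≤ b ^ (j+1) * (q-d)^(j+1) := h3
        _ ≤ (q^2)^(j+1) := h2
        _ = q ^ (j+1+1) * q ^ j := by ring
    exact le_of_mul_le_mul_right h5 hqj

private lemma SI (n : ℕ) (u M c : ℝ) (hu1 : 1 ≤ u) (huM : u ≤ M)
    (hn : (n:ℝ) + 1 ≤ M) (hc : 0 ≤ c) :
    u * (1+c) * (1 + (u-1)*c/(M-1)) ^ n + (M-u) * (1 + u*c/(M-1)) ^ n
      ≤ M * (1 + u*c/M) ^ (n+1) := by
  have hM0 : (0:ℝ) < M := by linarith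
  cases n with
  | zero =>
    have : M * (1 + u*c/M) ^ (0+1) = M + u*c := by rw [zero_add, pow_one]; field_simp
    rw [this]; norm_num; linarith
  | succ m =>
    set n := m + 1 with hnn
    have hM2 : (2:ℝ) ≤ M := by rw [hnn] at hn; push_cast at hn; linarith
    have hM1 : (0:ℝ) < M - 1 := by linarith
    set a : ℝ := 1 + (u-1)*c/(M-1) with ha
    set b : ℝ := 1 + u*c/(M-1) with hb
    set q : ℝ := 1 + u*c/M with hq
    have ha0 : 0 ≤ a := by
      have : 0 ≤ (u-1)*c/(M-1) := div_nonneg (mul_nonneg (by linarith) hc) (le_of_lt hM1)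
      rw [ha]; linarith
    have hq1 : 1 ≤ q := by
      have : 0 ≤ u*c/M := div_nonneg (mul_nonneg (by linarith) hc) (le_of_lt hM0)
      rw [hq]; linarith
    have haq : a ≤ q := by
      rw [ha, hq]
      have : (u-1)*c/(M-1) ≤ u*c/M := by
        rw [div_le_div_iff₀ hM1 hM0]; nlinarith
      linarith
    have hqb : q ≤ b := by
      rw [hb, hq]
      have : u*c/M ≤ u*c/(M-1) := by
        rw [div_le_div_iff₀ hM0 hM1]; nlinarith
      linarith
    have hbq : b - q = u*c/((M-1)*M) := by
      rw [hb, hq]; field_simp; ring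
    have hqa : q - a = (M-u)*c/(M*(M-1)) := by
      rw [ha, hq]; field_simp; ring
    have hba : b - a = c/(M-1) := by
      rw [ha, hb]; field_simp; ring
    -- key : ∀ i < n, b^i ≤ q^(i+1)
    have hkey : ∀ i ∈ Finset.range n, b ^ i * a ^ (n-1-i) ≤ (q * q ^ i) * a ^ (n-1-i) := by
      intro i hi
      have hi' : (i:ℝ) ≤ M - 2 := by
        have : i ≤ m := by
          have := Finset.mem_range.mp hi; omega
        have : (i:ℝ) ≤ (m:ℝ) := by exact_mod_cast this
        rw [hnn] at hn; push_cast at hn; linarith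
      have hcnd : (i:ℝ) * (b - q) ≤ q - 1 := by
        rw [hbq, hq]
        have h1 : (i:ℝ) * (u*c/((M-1)*M)) ≤ (M-1) * (u*c/((M-1)*M)) := by
          apply mul_le_mul_of_nonneg_right (by linarith) (by positivity)
        have h2 : (M-1) * (u*c/((M-1)*M)) = u*c/M := by field_simp
        simp only [add_sub_cancel_left]
        rw [h2] at h1; linarith
      have := key_pow q b i hq1 hqb hcnd
      have h3 : b ^ i ≤ q * q ^ i := by
        calc b ^ i ≤ q ^ (i+1) := this
          _ = q * q ^ i := by ring
      exact mul_le_mul_of_nonneg_right h3 (pow_nonneg ha0 _)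
    have hS : (∑ i ∈ Finset.range n, b ^ i * a ^ (n-1-i))
        ≤ q * ∑ i ∈ Finset.range n, q ^ i * a ^ (n-1-i) := by
      rw [Finset.mul_sum]
      apply Finset.sum_le_sum
      intro i hi
      have := hkey i hi
      calc b ^ i * a ^ (n-1-i) ≤ (q * q ^ i) * a ^ (n-1-i) := this
        _ = q * (q ^ i * a ^ (n-1-i)) := by ring
    have hgb : (∑ i ∈ Finset.range n, b ^ i * a ^ (n-1-i)) * (b - a) = b ^ n - a ^ n :=
      geom_sum₂_mul b a n
    have hgq : (∑ i ∈ Finset.range n, q ^ i * a ^ (n-1-i)) * (q - a) = q ^ n - a ^ n :=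
      geom_sum₂_mul q a n
    set Sb := ∑ i ∈ Finset.range n, b ^ i * a ^ (n-1-i) with hSb
    set Sq := ∑ i ∈ Finset.range n, q ^ i * a ^ (n-1-i) with hSq
    -- coefficient identities
    have e4 : u * (1+c) = M * q - (M - u) := by rw [hq]; field_simp; ring
    have e1 : (M - u) * (b - a) * q = M * q * (q - a) := by
      rw [hba, hqa]; field_simp
    have hcoef : 0 ≤ (M - u) * (b - a) := by
      rw [hba]
      exact mul_nonneg (by linarith) (div_nonneg hc (le_of_lt hM1))
    have hmain : (M-u) * (b-a) * Sb ≤ (M-u) * (b-a) * (q * Sq) := by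
      apply mul_le_mul_of_nonneg_left hS hcoef
    calc u * (1+c) * a ^ n + (M-u) * b ^ n
        = M * q * a ^ n + (M-u) * ((b-a) * Sb) := by
          have : (b - a) * Sb = b ^ n - a ^ n := by rw [mul_comm]; exact hgb
          rw [this]; linear_combination a ^ n * e4
      _ ≤ M * q * a ^ n + M * q * ((q-a) * Sq) := by
          have h8 : (M-u) * ((b-a) * Sb) = (M-u)*(b-a)*Sb := by ring
          have h9 : M * q * ((q-a) * Sq) = (M-u)*(b-a)*(q*Sq) := by
            linear_combination Sq * e1.symm
          rw [h8, h9]; linarith [hmain]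
      _ = M * q * q ^ n := by
          have : (q - a) * Sq = q ^ n - a ^ n := by rw [mul_comm]; exact hgq
          rw [this]; ring
      _ = M * q ^ (n+1) := by ring

private def fiberEquiv {α β : Type*} [DecidableEq α] [DecidableEq β] (x : α) (y : β) :
    {e : α ≃ β // e x = y} ≃ ({a : α // a ≠ x} ≃ {z : β // z ≠ y}) where
  toFun e := Equiv.subtypeEquiv e.1 (fun a => by
    constructor
    · intro h hc
      exact h (e.1.injective (by rw [hc, e.2]))
    · intro h hc
      exact h (by rw [hc, e.2]))
  invFun f := ⟨(Equiv.optionSubtypeNe x).symm.trans ((f.optionCongr).trans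
      (Equiv.optionSubtypeNe y)), by
    simp [Equiv.optionSubtypeNe_symm_self]⟩
  left_inv e := by
    apply Subtype.ext
    apply Equiv.ext
    intro a
    by_cases h : a = x
    · subst h
      simp [Equiv.optionSubtypeNe_symm_self, e.2]
    · simp [Equiv.optionSubtypeNe_symm_of_ne h]
  right_inv f := by
    apply Equiv.ext
    rintro ⟨a, ha⟩
    apply Subtype.ext
    simp [Equiv.optionSubtypeNe_symm_of_ne ha]

private lemma fiberEquiv_apply_coe {α β : Type*} [DecidableEq α] [DecidableEq β] (x : α) (y : β)
    (e : {e : α ≃ β // e x = y}) (a' : {a : α // a ≠ x}) :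
    ((fiberEquiv x y e a' : {z : β // z ≠ y}) : β) = (e : α ≃ β) (a' : α) := rfl

universe v

private lemma main_bound (E : ℝ) (hE : 1 ≤ E) :
    ∀ (n : ℕ) (α β : Type v) [Fintype α] [DecidableEq α] [Fintype β] [DecidableEq β]
      (s : Finset α) (_ : s.card = n) (U : Finset β),
    (∑ e : α ≃ β, ∏ a ∈ s, (if e a ∈ U then E else 1))
      ≤ (Fintype.card (α ≃ β) : ℝ) *
          (1 + (U.card : ℝ) * (E-1) / (Fintype.card β : ℝ)) ^ n := by
  intro n
  induction n with
  | zero =>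
    intro α β _ _ _ _ s hs U
    rw [Finset.card_eq_zero] at hs
    subst hs
    simp
  | succ n ih =>
    intro α β _ _ _ _ s hs U
    have hsne : s.Nonempty := Finset.card_pos.mp (by omega)
    obtain ⟨x, hx⟩ := hsne
    have hE0 : (0:ℝ) ≤ E := by linarith
    by_cases hcard : Fintype.card α = Fintype.card β
    case neg =>
      have hie : IsEmpty (α ≃ β) := ⟨fun e => hcard (Fintype.card_congr e)⟩
      rw [Fintype.card_eq_zero]
      simp
    case pos =>
    cases isEmpty_or_nonempty β with
    | inl hbe =>
      have : IsEmpty α := Fintype.card_eq_zero_iff.mp (by rw [hcard, Fintype.card_eq_zero])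
      exact (this.false x).elim
    | inr hbne =>
    set M := Fintype.card β with hM
    have hM1 : 1 ≤ M := Fintype.card_pos
    by_cases hU0 : U = ∅
    case pos =>
      subst hU0
      simp
    case neg =>
    have hu1 : 1 ≤ U.card := Finset.card_pos.mpr (Finset.nonempty_iff_ne_empty.mpr hU0)
    have huM : U.card ≤ M := Finset.card_le_univ U
    have hnM : n + 1 ≤ M := by
      rw [← hcard, ← hs]; exact Finset.card_le_univ s
    -- cardinality of the subtype-ne sets
    have hcne : ∀ y : β, Fintype.card {z : β // z ≠ y} = M - 1 := by
      intro y
      have h1 : Fintype.card {z : β // ¬ (z = y)} = M - Fintype.card {z : β // z = y} :=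
        Fintype.card_subtype_compl _
      have h2 : Fintype.card {z : β // z = y} = 1 := Fintype.card_subtype_eq y
      rw [h2] at h1
      exact h1
    -- common fiber cardinality
    obtain ⟨y₀⟩ := hbne
    set D : ℕ := Fintype.card ({a : α // a ≠ x} ≃ {z : β // z ≠ y₀}) with hD
    have hDy : ∀ y : β, Fintype.card ({a : α // a ≠ x} ≃ {z : β // z ≠ y}) = D := by
      intro y
      exact Fintype.card_congr (Equiv.equivCongr (Equiv.refl _)
        (Fintype.equivOfCardEq (by rw [hcne y, hcne y₀])))
    have hfibcard : ∀ y : β, Fintype.card {e : α ≃ β // e x = y} = D := fun y =>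
      (Fintype.card_congr (fiberEquiv x y)).trans (hDy y)
    have hMD : (M : ℝ) * (D : ℝ) = (Fintype.card (α ≃ β) : ℝ) := by
      have h1 := Fintype.sum_fiberwise (fun e : α ≃ β => e x) (fun _ : α ≃ β => (1:ℝ))
      have h2 : ∀ y : β, (∑ _e : {e : α ≃ β // e x = y}, (1:ℝ)) = (D:ℝ) := by
        intro y
        rw [Finset.sum_const, Finset.card_univ, hfibcard y, nsmul_eq_mul, mul_one]
      rw [Finset.sum_congr rfl (fun y _ => h2 y)] at h1
      simpa using h1
    -- the fiberwise decomposition of the main sum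
    have hdec := (Fintype.sum_fiberwise (fun e : α ≃ β => e x)
      (fun e : α ≃ β => ∏ a ∈ s, (if e a ∈ U then E else 1))).symm
    -- per-fiber rewrite
    have hfib : ∀ y : β,
        (∑ e : {e : α ≃ β // e x = y}, ∏ a ∈ s, (if (e : α ≃ β) a ∈ U then E else 1))
        = (if y ∈ U then E else 1) *
          ∑ f : ({a : α // a ≠ x} ≃ {z : β // z ≠ y}),
            ∏ a' ∈ (s.erase x).subtype (· ≠ x),
              (if ((f a' : {z : β // z ≠ y}) : β) ∈ U then E else 1) := by
      intro y
      rw [Finset.mul_sum]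
      apply Fintype.sum_equiv (fiberEquiv x y)
      intro e
      have h1 : (∏ a ∈ s, (if (e : α ≃ β) a ∈ U then E else 1))
          = (if (e : α ≃ β) x ∈ U then E else 1) *
            ∏ a ∈ s.erase x, (if (e : α ≃ β) a ∈ U then E else 1) :=
        (Finset.mul_prod_erase s _ hx).symm
      rw [h1, e.2]
      congr 1
      show _ = ∏ a' ∈ (s.erase x).subtype (· ≠ x), (if (e : α ≃ β) (a' : α) ∈ U then E else 1)
      rw [Finset.prod_subtype_eq_prod_filter (fun a => if (e : α ≃ β) a ∈ U then E else 1)]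
      rw [Finset.filter_true_of_mem (fun a ha => (Finset.mem_erase.mp ha).1)]
    -- apply the induction hypothesis to each inner sum
    have hs' : ((s.erase x).subtype (· ≠ x)).card = n := by
      rw [Finset.card_subtype, Finset.filter_true_of_mem (fun a ha => (Finset.mem_erase.mp ha).1),
        Finset.card_erase_of_mem hx, hs]
      omega
    have hinner : ∀ y : β,
        (∑ f : ({a : α // a ≠ x} ≃ {z : β // z ≠ y}),
            ∏ a' ∈ (s.erase x).subtype (· ≠ x),
              (if ((f a' : {z : β // z ≠ y}) : β) ∈ U then E else 1))
        ≤ (D : ℝ) * (1 + ((U.erase y).card : ℝ) * (E-1) / ((M:ℝ) - 1)) ^ n := by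
      intro y
      have happ := ih {a : α // a ≠ x} {z : β // z ≠ y}
        ((s.erase x).subtype (· ≠ x)) hs' (U.subtype (· ≠ y))
      simp only [Finset.mem_subtype] at happ
      rw [hDy y, hcne y, Finset.card_subtype, Finset.filter_ne'] at happ
      rw [Nat.cast_sub hM1] at happ
      simpa using happ
    have hDnn : (0:ℝ) ≤ (D:ℝ) := Nat.cast_nonneg D
    set A : ℝ := 1 + ((U.card : ℝ) - 1) * (E-1) / ((M:ℝ) - 1) with hA
    set B : ℝ := 1 + (U.card : ℝ) * (E-1) / ((M:ℝ) - 1) with hB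
    have hstep : ∀ y : β, (if y ∈ U then E else 1) *
          ((D : ℝ) * (1 + ((U.erase y).card : ℝ) * (E-1) / ((M:ℝ) - 1)) ^ n)
        = (if y ∈ U then E * ((D:ℝ) * A ^ n) else (D:ℝ) * B ^ n) := by
      intro y
      by_cases hy : y ∈ U
      · rw [if_pos hy, if_pos hy, Finset.card_erase_of_mem hy, Nat.cast_sub hu1]
        push_cast
        ring
      · rw [if_neg hy, if_neg hy, Finset.erase_eq_of_notMem hy, one_mul]
    have hcompl : (Finset.univ.filter (fun y : β => ¬ y ∈ U)).card = M - U.card := by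
      rw [Finset.filter_not, Finset.filter_univ_mem, Finset.card_sdiff_of_subset (Finset.subset_univ U),
        Finset.card_univ]
    have hSI := SI n (U.card : ℝ) (M : ℝ) (E - 1)
      (by exact_mod_cast hu1) (by exact_mod_cast huM)
      (by exact_mod_cast hnM) (by linarith)
    calc (∑ e : α ≃ β, ∏ a ∈ s, (if e a ∈ U then E else 1))
        = ∑ y : β, ∑ e : {e : α ≃ β // e x = y},
            ∏ a ∈ s, (if (e : α ≃ β) a ∈ U then E else 1) := hdec
      _ = ∑ y : β, (if y ∈ U then E else 1) *
            ∑ f : ({a : α // a ≠ x} ≃ {z : β // z ≠ y}),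
              ∏ a' ∈ (s.erase x).subtype (· ≠ x),
                (if ((f a' : {z : β // z ≠ y}) : β) ∈ U then E else 1) :=
          Finset.sum_congr rfl (fun y _ => hfib y)
      _ ≤ ∑ y : β, (if y ∈ U then E else 1) *
            ((D : ℝ) * (1 + ((U.erase y).card : ℝ) * (E-1) / ((M:ℝ) - 1)) ^ n) := by
          apply Finset.sum_le_sum
          intro y _
          apply mul_le_mul_of_nonneg_left (hinner y)
          by_cases hy : y ∈ U
          · rw [if_pos hy]; linarith
          · rw [if_neg hy]; norm_num
      _ = ∑ y : β, (if y ∈ U then E * ((D:ℝ) * A ^ n) else (D:ℝ) * B ^ n) :=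
          Finset.sum_congr rfl (fun y _ => hstep y)
      _ = (U.card : ℝ) * (E * ((D:ℝ) * A ^ n)) + ((M:ℝ) - (U.card:ℝ)) * ((D:ℝ) * B ^ n) := by
          rw [Finset.sum_ite, Finset.sum_const, Finset.sum_const, Finset.filter_univ_mem,
            hcompl, nsmul_eq_mul, nsmul_eq_mul, Nat.cast_sub huM]
      _ = (D:ℝ) * ((U.card:ℝ) * (1 + (E-1)) * A ^ n + ((M:ℝ) - (U.card:ℝ)) * B ^ n) := by
          ring
      _ ≤ (D:ℝ) * ((M:ℝ) * (1 + (U.card:ℝ) * (E-1) / (M:ℝ)) ^ (n+1)) := by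
          apply mul_le_mul_of_nonneg_left _ hDnn
          rw [hA, hB]
          exact hSI
      _ = (Fintype.card (α ≃ β) : ℝ) * (1 + (U.card : ℝ) * (E-1) / ((M:ℝ))) ^ (n+1) := by
          rw [← hMD]; ring

theorem stmt4 {X : Type*} [Fintype X] [DecidableEq X]
    (U K : Finset X) (hU : U.Nonempty) (hK : K.Nonempty)
    (lam : ℝ) (hlam : 0 < lam) :
    (∑ σ : Equiv.Perm X, Real.exp (lam * ((K.image ⇑σ ∩ U).card : ℝ))) /
        (Fintype.card (Equiv.Perm X) : ℝ) ≤
      ((U.card : ℝ) / (Fintype.card X : ℝ) * Real.exp lam +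
        1 - (U.card : ℝ) / (Fintype.card X : ℝ)) ^ K.card := by
  have hX : 0 < Fintype.card X := Fintype.card_pos_iff.mpr ⟨hU.choose⟩
  set E : ℝ := Real.exp lam with hEdef
  have hE : 1 ≤ E := Real.one_le_exp hlam.le
  have hpt : ∀ σ : Equiv.Perm X,
      Real.exp (lam * ((K.image ⇑σ ∩ U).card : ℝ))
        = ∏ x ∈ K, (if σ x ∈ U then E else 1) := by
    intro σ
    have himg : K.image ⇑σ ∩ U = (K.filter (fun x => σ x ∈ U)).image ⇑σ := by
      ext y
      simp only [Finset.mem_inter, Finset.mem_image, Finset.mem_filter]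
      constructor
      · rintro ⟨⟨x, hx, rfl⟩, hy⟩
        exact ⟨x, ⟨hx, hy⟩, rfl⟩
      · rintro ⟨x, ⟨hx, hy⟩, rfl⟩
        exact ⟨⟨x, hx, rfl⟩, hy⟩
    rw [himg, Finset.card_image_of_injective _ σ.injective, mul_comm, Real.exp_nat_mul,
      Finset.prod_ite (fun _ => E) (fun _ => (1:ℝ)), Finset.prod_const, Finset.prod_const_one,
      mul_one]
  rw [div_le_iff₀ (by positivity)]
  calc (∑ σ : Equiv.Perm X, Real.exp (lam * ((K.image ⇑σ ∩ U).card : ℝ)))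
      = ∑ e : X ≃ X, ∏ x ∈ K, (if e x ∈ U then E else 1) :=
        Finset.sum_congr rfl (fun σ _ => hpt σ)
    _ ≤ (Fintype.card (X ≃ X) : ℝ) *
          (1 + (U.card : ℝ) * (E-1) / (Fintype.card X : ℝ)) ^ K.card :=
        main_bound E hE K.card X X K rfl U
    _ = ((U.card : ℝ) / (Fintype.card X : ℝ) * E + 1 - (U.card : ℝ) / (Fintype.card X : ℝ))
          ^ K.card * (Fintype.card (Equiv.Perm X) : ℝ) := by
        have h1 : (1 : ℝ) + (U.card : ℝ) * (E-1) / (Fintype.card X : ℝ)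
            = (U.card : ℝ) / (Fintype.card X : ℝ) * E + 1 - (U.card : ℝ) / (Fintype.card X : ℝ) := by
          field_simp
          ring
        rw [h1, mul_comm]
end

section
/- Let X be a finite set, let σ be a uniformly random permutation of X, and let U and K be nonempty subsets of X with U ≠ X; write p = |U|/|X| and k = |K|. Then for every x > 0 with p + x < 1, P(|(K·σ) ∩ U| > (p+x)k) ≤ exp(−H(p+x‖p)·k), and for every x with 0 < x < p, P(|(K·σ) ∩ U| < (p−x)k) ≤ exp(−H(p−x‖p)·k). -/
/-- The relative entropy (Kullback–Leibler divergence) `H(q‖p)` between Bernoulli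
distributions with parameters `q` and `p`. -/
noncomputable def relEntropy (q p : ℝ) : ℝ :=
  q * Real.log (q / p) + (1 - q) * Real.log ((1 - q) / (1 - p))

section ChernoffAux

open Finset Equiv Real

variable {X : Type*} [Fintype X] [DecidableEq X]

private lemma exists_perm_image (B B' : Finset X) (h : B.card = B'.card) :
    ∃ τ : Equiv.Perm X, B.image τ = B' := by
  classical
  have e : {x // x ∈ B} ≃ {x // x ∈ B'} :=
    Fintype.equivOfCardEq (by simpa [Fintype.card_coe] using h)
  refine ⟨e.extendSubtype, ?_⟩
  apply Finset.eq_of_subset_of_card_le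
  · intro x hx
    obtain ⟨a, ha, rfl⟩ := Finset.mem_image.mp hx
    exact e.extendSubtype_mem a ha
  · rw [Finset.card_image_of_injective _ (Equiv.injective _), h]

private lemma fiber_card_eq (A B B' : Finset X) (h : B.card = B'.card) :
    (Finset.univ.filter fun σ : Equiv.Perm X => A.image σ = B).card
      = (Finset.univ.filter fun σ : Equiv.Perm X => A.image σ = B').card := by
  classical
  obtain ⟨τ, hτ⟩ := exists_perm_image B B' h
  refine Finset.card_nbij' (fun σ => τ * σ) (fun σ => τ⁻¹ * σ) ?_ ?_ ?_ ?_
  · intro σ hσ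
    simp only [Finset.mem_coe, Finset.mem_filter, Finset.mem_univ, true_and] at hσ ⊢
    rw [show ⇑(τ * σ) = ⇑τ ∘ ⇑σ from rfl, ← Finset.image_image, hσ, hτ]
  · intro σ hσ
    simp only [Finset.mem_coe, Finset.mem_filter, Finset.mem_univ, true_and] at hσ ⊢
    rw [show ⇑(τ⁻¹ * σ) = ⇑τ⁻¹ ∘ ⇑σ from rfl, ← Finset.image_image, hσ, ← hτ,
      Finset.image_image, show ⇑τ⁻¹ ∘ ⇑τ = id from funext fun x => τ.symm_apply_apply x,
      Finset.image_id]
  · intro σ _; simp [mul_assoc]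
  · intro σ _; simp [mul_assoc]

private lemma fiber_mul (A B : Finset X) {i : ℕ} (hA : A.card = i) (hB : B.card = i) :
    (Finset.univ.filter fun σ : Equiv.Perm X => A.image σ = B).card
        * (Fintype.card X).choose i
      = Fintype.card (Equiv.Perm X) := by
  classical
  have hpart : (Finset.univ : Finset (Equiv.Perm X)).card
      = ∑ B' ∈ Finset.powersetCard i Finset.univ,
          (Finset.univ.filter fun σ : Equiv.Perm X => A.image σ = B').card := by
    refine Finset.card_eq_sum_card_fiberwise ?_
    intro σ _
    rw [Finset.mem_coe, Finset.mem_powersetCard]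
    exact ⟨Finset.subset_univ _, by rw [Finset.card_image_of_injective _ (Equiv.injective _), hA]⟩
  have hconst : ∀ B' ∈ Finset.powersetCard i (Finset.univ : Finset X),
      (Finset.univ.filter fun σ : Equiv.Perm X => A.image σ = B').card
        = (Finset.univ.filter fun σ : Equiv.Perm X => A.image σ = B).card := by
    intro B' hB'
    exact fiber_card_eq A B' B (by rw [(Finset.mem_powersetCard.mp hB').2, hB])
  rw [Finset.sum_congr rfl hconst, Finset.sum_const, Finset.card_powersetCard,
    Finset.card_univ, smul_eq_mul] at hpart
  rw [← Finset.card_univ, hpart, mul_comm]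

private lemma count_subset (U A : Finset X) {i : ℕ} (hA : A.card = i) :
    (Finset.univ.filter fun σ : Equiv.Perm X => A.image σ ⊆ U).card
        * (Fintype.card X).choose i
      = U.card.choose i * Fintype.card (Equiv.Perm X) := by
  classical
  have hmem : ∀ σ ∈ Finset.univ.filter fun σ : Equiv.Perm X => A.image ⇑σ ⊆ U,
      (fun σ : Equiv.Perm X => A.image ⇑σ) σ ∈ Finset.powersetCard i U := by
    intro σ hσ
    rw [Finset.mem_powersetCard]
    exact ⟨(Finset.mem_filter.mp hσ).2,
      by rw [Finset.card_image_of_injective _ (Equiv.injective _), hA]⟩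
  have hsplit := Finset.card_eq_sum_card_fiberwise hmem
  have hinner : ∀ B ∈ Finset.powersetCard i U,
      ((Finset.univ.filter fun σ : Equiv.Perm X => A.image ⇑σ ⊆ U).filter
            fun σ : Equiv.Perm X => A.image ⇑σ = B)
        = Finset.univ.filter fun σ : Equiv.Perm X => A.image ⇑σ = B := by
    intro B hB
    rw [Finset.filter_filter]
    apply Finset.filter_congr
    intro σ _
    constructor
    · rintro ⟨-, h⟩; exact h
    · rintro rfl; exact ⟨(Finset.mem_powersetCard.mp hB).1, rfl⟩
  rw [hsplit, Finset.sum_congr rfl fun B hB => by rw [hinner B hB], Finset.sum_mul,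
    Finset.sum_congr rfl fun B hB => fiber_mul A B hA (Finset.mem_powersetCard.mp hB).2,
    Finset.sum_const, Finset.card_powersetCard, smul_eq_mul]

private lemma descFactorial_mul_pow_le {u n : ℕ} (h : u ≤ n) (i : ℕ) :
    u.descFactorial i * n ^ i ≤ u ^ i * n.descFactorial i := by
  induction i with
  | zero => simp
  | succ i ih =>
    rw [Nat.descFactorial_succ, Nat.descFactorial_succ, pow_succ, pow_succ]
    calc (u - i) * u.descFactorial i * (n ^ i * n)
        = ((u - i) * n) * (u.descFactorial i * n ^ i) := by ring
      _ ≤ (u * (n - i)) * (u ^ i * n.descFactorial i) := by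
          refine Nat.mul_le_mul ?_ ih
          rw [Nat.sub_mul, Nat.mul_sub]
          have h1 : u * i ≤ i * n := by
            calc u * i ≤ n * i := Nat.mul_le_mul_right i h
              _ = i * n := Nat.mul_comm n i
          exact Nat.sub_le_sub_left h1 (u * n)
      _ = u ^ i * u * ((n - i) * n.descFactorial i) := by ring

private lemma choose_mul_pow_le {u n : ℕ} (h : u ≤ n) (i : ℕ) :
    u.choose i * n ^ i ≤ u ^ i * n.choose i := by
  have := descFactorial_mul_pow_le h i
  rw [Nat.descFactorial_eq_factorial_mul_choose, Nat.descFactorial_eq_factorial_mul_choose] at this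
  have h2 : i.factorial * (u.choose i * n ^ i) ≤ i.factorial * (u ^ i * n.choose i) := by
    calc i.factorial * (u.choose i * n ^ i) = i.factorial * u.choose i * n ^ i := by ring
      _ ≤ u ^ i * (i.factorial * n.choose i) := this
      _ = i.factorial * (u ^ i * n.choose i) := by ring
  exact Nat.le_of_mul_le_mul_left h2 i.factorial_pos

private lemma filter_subset_card_le (U A : Finset X) {i : ℕ} (hA : A.card = i)
    (hn : 0 < Fintype.card X) :
    ((Finset.univ.filter fun σ : Equiv.Perm X => A.image σ ⊆ U).card : ℝ)
      ≤ ((U.card : ℝ) / (Fintype.card X : ℝ)) ^ i * (Fintype.card (Equiv.Perm X) : ℝ) := by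
  classical
  set n := Fintype.card X
  have hin : i ≤ n := hA ▸ (Finset.card_le_univ A).trans_eq Finset.card_univ
  have hCn : 0 < (n.choose i : ℝ) := by exact_mod_cast Nat.choose_pos hin
  have hnp : (0:ℝ) < (n:ℝ) ^ i := by positivity
  have hcount : ((Finset.univ.filter fun σ : Equiv.Perm X => A.image σ ⊆ U).card : ℝ)
      * (n.choose i : ℝ) = (U.card.choose i : ℝ) * (Fintype.card (Equiv.Perm X) : ℝ) := by
    exact_mod_cast congrArg (Nat.cast : ℕ → ℝ) (count_subset U A hA)
  have hkey : ((U.card.choose i : ℝ)) * (n:ℝ) ^ i ≤ (U.card : ℝ) ^ i * (n.choose i : ℝ) := by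
    exact_mod_cast choose_mul_pow_le ((Finset.card_le_univ U).trans_eq Finset.card_univ) i
  rw [div_pow, div_mul_eq_mul_div, le_div_iff₀ hnp]
  refine le_of_mul_le_mul_right ?_ hCn
  calc ((Finset.univ.filter fun σ : Equiv.Perm X => A.image σ ⊆ U).card : ℝ) * (n:ℝ)^i
        * (n.choose i : ℝ)
      = (((Finset.univ.filter fun σ : Equiv.Perm X => A.image σ ⊆ U).card : ℝ)
          * (n.choose i : ℝ)) * (n:ℝ)^i := by ring
    _ = ((U.card.choose i : ℝ) * (n:ℝ)^i) * (Fintype.card (Equiv.Perm X) : ℝ) := by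
        rw [hcount]; ring
    _ ≤ ((U.card : ℝ)^i * (n.choose i : ℝ)) * (Fintype.card (Equiv.Perm X) : ℝ) := by
        refine mul_le_mul_of_nonneg_right hkey (by positivity)
    _ = (U.card:ℝ)^i * (Fintype.card (Equiv.Perm X) : ℝ) * (n.choose i : ℝ) := by ring

private lemma pc_card_eq (K U : Finset X) (i : ℕ) (σ : Equiv.Perm X) :
    (Finset.powersetCard i (K.image ⇑σ ∩ U)).card
      = ((Finset.powersetCard i K).filter fun S => S.image ⇑σ ⊆ U).card := by
  classical
  refine Finset.card_nbij' (fun T => T.image ⇑σ⁻¹) (fun S => S.image ⇑σ) ?_ ?_ ?_ ?_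
  · intro T hT
    rw [Finset.mem_coe, Finset.mem_powersetCard] at hT
    obtain ⟨hTsub, hTcard⟩ := hT
    have hTK : T ⊆ K.image ⇑σ := hTsub.trans Finset.inter_subset_left
    have hTU : T ⊆ U := hTsub.trans Finset.inter_subset_right
    rw [Finset.mem_coe, Finset.mem_filter, Finset.mem_powersetCard]
    refine ⟨⟨?_, by rw [Finset.card_image_of_injective _ (Equiv.injective _), hTcard]⟩, ?_⟩
    · intro a ha
      dsimp only at ha
      obtain ⟨b, hb, rfl⟩ := Finset.mem_image.mp ha
      obtain ⟨c, hc, rfl⟩ := Finset.mem_image.mp (hTK hb)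
      simpa using hc
    · intro a ha
      dsimp only at ha
      obtain ⟨b, hb, rfl⟩ := Finset.mem_image.mp ha
      obtain ⟨c, hc, rfl⟩ := Finset.mem_image.mp hb
      simpa using hTU hc
  · intro S hS
    rw [Finset.mem_coe, Finset.mem_filter, Finset.mem_powersetCard] at hS
    obtain ⟨⟨hSK, hScard⟩, hSU⟩ := hS
    rw [Finset.mem_coe, Finset.mem_powersetCard]
    refine ⟨Finset.subset_inter (Finset.image_subset_image hSK) hSU,
      by rw [Finset.card_image_of_injective _ (Equiv.injective _), hScard]⟩
  · intro T _
    dsimp only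
    rw [Finset.image_image, show ⇑σ ∘ ⇑σ⁻¹ = id from funext fun x => σ.apply_symm_apply x,
      Finset.image_id]
  · intro S _
    dsimp only
    rw [Finset.image_image, show ⇑σ⁻¹ ∘ ⇑σ = id from funext fun x => σ.symm_apply_apply x,
      Finset.image_id]

private lemma sum_pc_le (K U : Finset X) (i : ℕ) (hn : 0 < Fintype.card X) :
    ((∑ σ : Equiv.Perm X, (Finset.powersetCard i (K.image ⇑σ ∩ U)).card : ℕ) : ℝ)
      ≤ (K.card.choose i : ℝ) * ((U.card : ℝ) / (Fintype.card X : ℝ)) ^ i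
          * (Fintype.card (Equiv.Perm X) : ℝ) := by
  classical
  have hswap : (∑ σ : Equiv.Perm X, (Finset.powersetCard i (K.image ⇑σ ∩ U)).card : ℕ)
      = ∑ S ∈ Finset.powersetCard i K,
          (Finset.univ.filter fun σ : Equiv.Perm X => S.image ⇑σ ⊆ U).card := by
    calc (∑ σ : Equiv.Perm X, (Finset.powersetCard i (K.image ⇑σ ∩ U)).card : ℕ)
        = ∑ σ : Equiv.Perm X, ∑ S ∈ Finset.powersetCard i K,
            (if S.image ⇑σ ⊆ U then 1 else 0) := by
          refine Finset.sum_congr rfl fun σ _ => ?_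
          rw [pc_card_eq K U i σ, Finset.card_filter]
      _ = ∑ S ∈ Finset.powersetCard i K, ∑ σ : Equiv.Perm X,
            (if S.image ⇑σ ⊆ U then 1 else 0) := Finset.sum_comm
      _ = _ := by
          refine Finset.sum_congr rfl fun S _ => ?_
          rw [Finset.card_filter]
  rw [hswap]
  push_cast
  calc (∑ S ∈ Finset.powersetCard i K,
          ((Finset.univ.filter fun σ : Equiv.Perm X => S.image ⇑σ ⊆ U).card : ℝ))
      ≤ ∑ S ∈ Finset.powersetCard i K,
          ((U.card : ℝ) / (Fintype.card X : ℝ)) ^ i * (Fintype.card (Equiv.Perm X) : ℝ) := by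
        refine Finset.sum_le_sum fun S hS => ?_
        exact filter_subset_card_le U S (Finset.mem_powersetCard.mp hS).2 hn
    _ = (K.card.choose i : ℝ) * (((U.card : ℝ) / (Fintype.card X : ℝ)) ^ i
          * (Fintype.card (Equiv.Perm X) : ℝ)) := by
        rw [Finset.sum_const, Finset.card_powersetCard, nsmul_eq_mul]
    _ = _ := by ring

private lemma binom_expand (y : ℝ) {m k : ℕ} (hmk : m ≤ k) :
    (1 + y) ^ m = ∑ i ∈ Finset.range (k + 1), (m.choose i : ℝ) * y ^ i := by
  rw [add_comm, add_pow]
  simp only [one_pow, mul_one]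
  calc ∑ i ∈ Finset.range (m + 1), y ^ i * (m.choose i : ℝ)
      = ∑ i ∈ Finset.range (m + 1), (m.choose i : ℝ) * y ^ i :=
        Finset.sum_congr rfl fun i _ => by ring
    _ = ∑ i ∈ Finset.range (k + 1), (m.choose i : ℝ) * y ^ i := by
        refine Finset.sum_subset (Finset.range_subset_range.mpr (by omega)) ?_
        intro i _ hi
        rw [Finset.mem_range, not_lt] at hi
        rw [Nat.choose_eq_zero_of_lt (by omega)]
        simp

private lemma mgf_le (K U : Finset X) (hn : 0 < Fintype.card X) {y : ℝ} (hy : 0 ≤ y) :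
    ∑ σ : Equiv.Perm X, (1 + y) ^ ((K.image ⇑σ ∩ U).card)
      ≤ (Fintype.card (Equiv.Perm X) : ℝ)
          * (1 + ((U.card : ℝ) / (Fintype.card X : ℝ)) * y) ^ K.card := by
  classical
  set p : ℝ := (U.card : ℝ) / (Fintype.card X : ℝ) with hp
  have hp0 : 0 ≤ p := by positivity
  set k := K.card
  calc ∑ σ : Equiv.Perm X, (1 + y) ^ ((K.image ⇑σ ∩ U).card)
      = ∑ σ : Equiv.Perm X, ∑ i ∈ Finset.range (k + 1),
          (((Finset.powersetCard i (K.image ⇑σ ∩ U)).card : ℕ) : ℝ) * y ^ i := by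
        refine Finset.sum_congr rfl fun σ _ => ?_
        have hm : (K.image ⇑σ ∩ U).card ≤ k :=
          le_trans (Finset.card_le_card Finset.inter_subset_left)
            (le_of_eq (Finset.card_image_of_injective _ (Equiv.injective _)))
        rw [binom_expand y hm]
        refine Finset.sum_congr rfl fun i _ => ?_
        rw [Finset.card_powersetCard]
    _ = ∑ i ∈ Finset.range (k + 1),
          ((∑ σ : Equiv.Perm X, ((Finset.powersetCard i (K.image ⇑σ ∩ U)).card : ℕ) : ℕ) : ℝ)
            * y ^ i := by
        rw [Finset.sum_comm]
        refine Finset.sum_congr rfl fun i _ => ?_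
        rw [← Finset.sum_mul]
        push_cast
        ring
    _ ≤ ∑ i ∈ Finset.range (k + 1),
          ((k.choose i : ℝ) * p ^ i * (Fintype.card (Equiv.Perm X) : ℝ)) * y ^ i := by
        refine Finset.sum_le_sum fun i _ => ?_
        exact mul_le_mul_of_nonneg_right (sum_pc_le K U i hn) (by positivity)
    _ = (Fintype.card (Equiv.Perm X) : ℝ) * ∑ i ∈ Finset.range (k + 1),
          (k.choose i : ℝ) * (p * y) ^ i := by
        rw [Finset.mul_sum]
        refine Finset.sum_congr rfl fun i _ => ?_
        rw [mul_pow]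
        ring
    _ = (Fintype.card (Equiv.Perm X) : ℝ) * (1 + p * y) ^ k := by
        rw [binom_expand (p * y) (le_refl k)]

private lemma upper_tail (U K : Finset X) (hU : U.Nonempty) (q : ℝ)
    (hpq : (U.card : ℝ) / (Fintype.card X : ℝ) < q) (hq1 : q < 1) :
    ((Finset.univ.filter fun σ : Equiv.Perm X =>
        q * (K.card : ℝ) < ((K.image ⇑σ ∩ U).card : ℝ)).card : ℝ)
        / (Fintype.card (Equiv.Perm X) : ℝ)
      ≤ Real.exp (-(relEntropy q ((U.card : ℝ) / (Fintype.card X : ℝ)) * (K.card : ℝ))) := by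
  classical
  obtain ⟨x, hx⟩ := hU
  have hn : 0 < Fintype.card X := Fintype.card_pos_iff.mpr ⟨x⟩
  set n := Fintype.card X with hn_def
  set p : ℝ := (U.card : ℝ) / (n : ℝ) with hp_def
  set k := K.card with hk_def
  have hp0 : 0 < p := by
    apply div_pos
    · exact_mod_cast Finset.card_pos.mpr ⟨x, hx⟩
    · exact_mod_cast hn
  have hq0 : 0 < q := hp0.trans hpq
  have h1q : 0 < 1 - q := by linarith
  have h1p : 0 < 1 - p := by linarith
  set x₀ : ℝ := q * (1 - p) / (p * (1 - q)) with hx₀_def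
  have hx₀ : 1 < x₀ := by
    rw [lt_div_iff₀ (by positivity)]
    nlinarith
  have hx₀pos : 0 < x₀ := lt_trans one_pos hx₀
  have hy : (0:ℝ) ≤ x₀ - 1 := by linarith
  have h1y : 1 + (x₀ - 1) = x₀ := by ring
  have hpy : 1 + p * (x₀ - 1) = (1 - p) / (1 - q) := by
    rw [hx₀_def]
    field_simp
    ring
  set N := Fintype.card (Equiv.Perm X) with hN_def
  have hN : (0:ℝ) < (N : ℝ) := by exact_mod_cast Fintype.card_pos
  set E := Finset.univ.filter fun σ : Equiv.Perm X =>
      q * (k : ℝ) < ((K.image ⇑σ ∩ U).card : ℝ) with hE_def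
  have hrp : 0 < x₀ ^ (q * (k : ℝ)) := Real.rpow_pos_of_pos hx₀pos _
  have step1 : (E.card : ℝ) * x₀ ^ (q * (k : ℝ))
      ≤ ∑ σ : Equiv.Perm X, (1 + (x₀ - 1)) ^ ((K.image ⇑σ ∩ U).card) := by
    calc (E.card : ℝ) * x₀ ^ (q * (k : ℝ))
        = ∑ _σ ∈ E, x₀ ^ (q * (k : ℝ)) := by rw [Finset.sum_const, nsmul_eq_mul]
      _ ≤ ∑ σ ∈ E, (1 + (x₀ - 1)) ^ ((K.image ⇑σ ∩ U).card) := by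
          refine Finset.sum_le_sum fun σ hσ => ?_
          have hσ' := (Finset.mem_filter.mp hσ).2
          rw [h1y]
          calc x₀ ^ (q * (k : ℝ)) ≤ x₀ ^ (((K.image ⇑σ ∩ U).card : ℝ)) :=
                Real.rpow_le_rpow_of_exponent_le hx₀.le hσ'.le
            _ = x₀ ^ ((K.image ⇑σ ∩ U).card) := Real.rpow_natCast _ _
      _ ≤ ∑ σ : Equiv.Perm X, (1 + (x₀ - 1)) ^ ((K.image ⇑σ ∩ U).card) := by
          refine Finset.sum_le_sum_of_subset_of_nonneg (Finset.subset_univ E) ?_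
          intro σ _ _
          rw [h1y]
          positivity
  have step2 : ∑ σ : Equiv.Perm X, (1 + (x₀ - 1)) ^ ((K.image ⇑σ ∩ U).card)
      ≤ (N : ℝ) * ((1 - p) / (1 - q)) ^ k := by
    have h2 := mgf_le K U hn hy
    rw [hpy] at h2
    exact h2
  have hA0 : (0:ℝ) < (1 - p) / (1 - q) := by positivity
  have key : (E.card : ℝ) * x₀ ^ (q * (k : ℝ)) ≤ (N : ℝ) * ((1 - p) / (1 - q)) ^ k :=
    le_trans step1 step2
  have hdiv : (E.card : ℝ) / (N : ℝ) ≤ ((1 - p) / (1 - q)) ^ k / x₀ ^ (q * (k : ℝ)) := by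
    rw [div_le_div_iff₀ hN hrp]
    calc (E.card : ℝ) * x₀ ^ (q * (k : ℝ)) ≤ (N : ℝ) * ((1 - p) / (1 - q)) ^ k := key
      _ = ((1 - p) / (1 - q)) ^ k * (N : ℝ) := mul_comm _ _
  refine hdiv.trans (le_of_eq ?_)
  have e1 : ((1 - p) / (1 - q)) ^ k = Real.exp ((k : ℝ) * Real.log ((1 - p) / (1 - q))) := by
    rw [← Real.log_pow, Real.exp_log (pow_pos hA0 k)]
  have e2 : x₀ ^ (q * (k : ℝ)) = Real.exp (Real.log x₀ * (q * (k : ℝ))) :=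
    Real.rpow_def_of_pos hx₀pos _
  rw [e1, e2, ← Real.exp_sub]
  congr 1
  have l1 : Real.log ((1 - p) / (1 - q)) = Real.log (1 - p) - Real.log (1 - q) :=
    Real.log_div h1p.ne' h1q.ne'
  have l2 : Real.log x₀ = Real.log q + Real.log (1 - p) - (Real.log p + Real.log (1 - q)) := by
    rw [hx₀_def, Real.log_div (by positivity) (by positivity),
      Real.log_mul hq0.ne' h1p.ne', Real.log_mul hp0.ne' h1q.ne']
  have l3 : Real.log (q / p) = Real.log q - Real.log p := Real.log_div hq0.ne' hp0.ne'
  have l4 : Real.log ((1 - q) / (1 - p)) = Real.log (1 - q) - Real.log (1 - p) :=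
    Real.log_div h1q.ne' h1p.ne'
  rw [l1, l2]
  unfold relEntropy
  rw [l3, l4]
  ring

private lemma relEntropy_compl (q p : ℝ) : relEntropy (1 - q) (1 - p) = relEntropy q p := by
  unfold relEntropy
  rw [show (1:ℝ) - (1 - q) = q by ring, show (1:ℝ) - (1 - p) = p by ring]
  ring

private lemma natCard_eq_filter {α : Type*} [Fintype α] (P : α → Prop) [DecidablePred P] :
    Nat.card {a : α | P a} = (Finset.univ.filter P).card := by
  simp [Nat.card_eq_fintype_card, Fintype.card_subtype]


end ChernoffAux

theorem stmt5 {X : Type*} [Fintype X] [DecidableEq X]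
    (U K : Finset X) (hU : U.Nonempty) (hK : K.Nonempty) (hUX : U ≠ Finset.univ) :
    (∀ x : ℝ, 0 < x → (U.card : ℝ) / (Fintype.card X : ℝ) + x < 1 →
      (Nat.card {σ : Equiv.Perm X |
          ((U.card : ℝ) / (Fintype.card X : ℝ) + x) * (K.card : ℝ) <
            ((K.image ⇑σ ∩ U).card : ℝ)} : ℝ) /
          (Fintype.card (Equiv.Perm X) : ℝ) ≤
        Real.exp (-(relEntropy ((U.card : ℝ) / (Fintype.card X : ℝ) + x)
          ((U.card : ℝ) / (Fintype.card X : ℝ)) * (K.card : ℝ)))) ∧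
    (∀ x : ℝ, 0 < x → x < (U.card : ℝ) / (Fintype.card X : ℝ) →
      (Nat.card {σ : Equiv.Perm X |
          ((K.image ⇑σ ∩ U).card : ℝ) <
            ((U.card : ℝ) / (Fintype.card X : ℝ) - x) * (K.card : ℝ)} : ℝ) /
          (Fintype.card (Equiv.Perm X) : ℝ) ≤
        Real.exp (-(relEntropy ((U.card : ℝ) / (Fintype.card X : ℝ) - x)
          ((U.card : ℝ) / (Fintype.card X : ℝ)) * (K.card : ℝ)))) := by
  classical
  obtain ⟨x₁, hx₁⟩ := hU
  have hn : 0 < Fintype.card X := Fintype.card_pos_iff.mpr ⟨x₁⟩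
  set n := Fintype.card X with hn_def
  set p : ℝ := (U.card : ℝ) / (n : ℝ) with hp_def
  have hun : U.card ≤ n := (Finset.card_le_univ U).trans_eq Finset.card_univ
  have hultn : U.card < n := lt_of_le_of_ne hun fun h => hUX (U.eq_univ_of_card h)
  have hp1 : p < 1 := by
    rw [hp_def, div_lt_one (by exact_mod_cast hn)]
    exact_mod_cast hultn
  have hp0 : 0 < p := by
    apply div_pos
    · exact_mod_cast Finset.card_pos.mpr ⟨x₁, hx₁⟩
    · exact_mod_cast hn
  have hcompl : ((Uᶜ.card : ℝ)) / (n : ℝ) = 1 - p := by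
    rw [Finset.card_compl, hp_def]
    rw [Nat.cast_sub hun]
    field_simp
  constructor
  · intro x hx0 hx1
    rw [natCard_eq_filter]
    exact upper_tail U K ⟨x₁, hx₁⟩ (p + x) (by linarith) hx1
  · intro x hx0 hxp
    rw [natCard_eq_filter]
    have hUc : Uᶜ.Nonempty := by
      rw [← Finset.card_pos, Finset.card_compl]
      omega
    have hfe : (Finset.univ.filter fun σ : Equiv.Perm X =>
          ((K.image ⇑σ ∩ U).card : ℝ) < (p - x) * (K.card : ℝ))
        = Finset.univ.filter fun σ : Equiv.Perm X =>
          ((Uᶜ.card : ℝ) / (n : ℝ) + x) * (K.card : ℝ) < ((K.image ⇑σ ∩ Uᶜ).card : ℝ) := by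
      refine Finset.filter_congr fun σ _ => ?_
      have hsd : K.image ⇑σ ∩ Uᶜ = K.image ⇑σ \ U := sdiff_eq.symm
      have hcc : ((K.image ⇑σ ∩ Uᶜ).card : ℝ)
          = (K.card : ℝ) - ((K.image ⇑σ ∩ U).card : ℝ) := by
        rw [hsd]
        have h3 := Finset.card_sdiff_add_card_inter (K.image ⇑σ) U
        have h4 : (K.image ⇑σ).card = K.card :=
          Finset.card_image_of_injective _ (Equiv.injective _)
        rw [h4] at h3
        have h5 : ((K.image ⇑σ \ U).card : ℝ) + ((K.image ⇑σ ∩ U).card : ℝ)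
            = (K.card : ℝ) := by exact_mod_cast congrArg (Nat.cast : ℕ → ℝ) h3
        linarith
      rw [hcc, hcompl]
      constructor
      · intro h; nlinarith
      · intro h; nlinarith
    rw [hfe]
    have hre : relEntropy ((Uᶜ.card : ℝ) / (n : ℝ) + x) ((Uᶜ.card : ℝ) / (n : ℝ))
        = relEntropy (p - x) p := by
      rw [hcompl, show (1 - p) + x = 1 - (p - x) by ring]
      exact relEntropy_compl (p - x) p
    have hfin := upper_tail Uᶜ K hUc ((Uᶜ.card : ℝ) / (n : ℝ) + x)
      (by linarith) (by rw [hcompl]; linarith)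
    rw [hre] at hfin
    exact hfin
end
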